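/- arXiv:1307.7572 — 7 statements merged into one kernel-verified Lean document; each statement's English description precedes it below -/
import Mathlib

section
/- The 𝔽-algebra U_q(𝔰𝔩₂) has a presentation by generators ν_x, y, y⁻¹, ν_z and relations y y⁻¹ = y⁻¹ y = 1, y ν_x y⁻¹ = q⁻² ν_x, y ν_z y⁻¹ = q² ν_z, and (q ν_z ν_x − q⁻¹ ν_x ν_z)/(q − q⁻¹) = 1 − y². Precisely, there is an 𝔽-algebra isomorphism from the algebra with this presentation to U_q(𝔰𝔩₂) in its Chevalley presentation (generators e, f, k, k⁻¹ and relations k k⁻¹ = k⁻¹ k = 1, k e k⁻¹ = q² e, k f k⁻¹ = q⁻² f, ef − fe = (k − k⁻¹)/(q − q⁻¹)) sending ν_x ↦ −q(q − q⁻¹)kf, y^{±1} ↦ k^{±1}, ν_z ↦ (q − q⁻¹)e, whose inverse sends e ↦ (q − q⁻¹)⁻¹ ν_z, k^{±1} ↦ y^{±1}, f ↦ −q⁻¹(q − q⁻¹)⁻¹ y⁻¹ ν_x. -/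
namespace Paper

/-- Generators for the Chevalley presentation of `U_q(sl2)`: `e`, `f`, `k`, `k⁻¹`. -/
inductive ChGen : Type
  | e | f | k | k'

/-- The defining relations of the Chevalley presentation of `U_q(sl2)`:
`k k⁻¹ = k⁻¹ k = 1`, `k e k⁻¹ = q² e`, `k f k⁻¹ = q⁻² f`,
`ef − fe = (k − k⁻¹)/(q − q⁻¹)`. -/
inductive ChRel (F : Type*) [Field F] (q : F) :
    FreeAlgebra F ChGen → FreeAlgebra F ChGen → Prop
  | kk' : ChRel F q (FreeAlgebra.ι F ChGen.k * FreeAlgebra.ι F ChGen.k') 1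
  | k'k : ChRel F q (FreeAlgebra.ι F ChGen.k' * FreeAlgebra.ι F ChGen.k) 1
  | kek' : ChRel F q
      (FreeAlgebra.ι F ChGen.k * FreeAlgebra.ι F ChGen.e * FreeAlgebra.ι F ChGen.k')
      (q ^ 2 • FreeAlgebra.ι F ChGen.e)
  | kfk' : ChRel F q
      (FreeAlgebra.ι F ChGen.k * FreeAlgebra.ι F ChGen.f * FreeAlgebra.ι F ChGen.k')
      ((q ^ 2)⁻¹ • FreeAlgebra.ι F ChGen.f)
  | ef : ChRel F q
      ((q - q⁻¹) • (FreeAlgebra.ι F ChGen.e * FreeAlgebra.ι F ChGen.f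
        - FreeAlgebra.ι F ChGen.f * FreeAlgebra.ι F ChGen.e))
      (FreeAlgebra.ι F ChGen.k - FreeAlgebra.ι F ChGen.k')

/-- `U_q(sl2)` in its Chevalley presentation. -/
abbrev UChev (F : Type*) [Field F] (q : F) := RingQuot (ChRel F q)

noncomputable def ce (F : Type*) [Field F] (q : F) : UChev F q :=
  RingQuot.mkAlgHom F (ChRel F q) (FreeAlgebra.ι F ChGen.e)

noncomputable def cf (F : Type*) [Field F] (q : F) : UChev F q :=
  RingQuot.mkAlgHom F (ChRel F q) (FreeAlgebra.ι F ChGen.f)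

noncomputable def ck (F : Type*) [Field F] (q : F) : UChev F q :=
  RingQuot.mkAlgHom F (ChRel F q) (FreeAlgebra.ι F ChGen.k)

noncomputable def ck' (F : Type*) [Field F] (q : F) : UChev F q :=
  RingQuot.mkAlgHom F (ChRel F q) (FreeAlgebra.ι F ChGen.k')

/-- Generators for the modified Chevalley presentation: `ν_x`, `y`, `y⁻¹`, `ν_z`. -/
inductive MGen : Type
  | nx | y | y' | nz

/-- The defining relations of the modified Chevalley presentation:
`y y⁻¹ = y⁻¹ y = 1`, `y ν_x y⁻¹ = q⁻² ν_x`, `y ν_z y⁻¹ = q² ν_z`,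
`(q ν_z ν_x − q⁻¹ ν_x ν_z)/(q − q⁻¹) = 1 − y²`. -/
inductive MRel (F : Type*) [Field F] (q : F) :
    FreeAlgebra F MGen → FreeAlgebra F MGen → Prop
  | yy' : MRel F q (FreeAlgebra.ι F MGen.y * FreeAlgebra.ι F MGen.y') 1
  | y'y : MRel F q (FreeAlgebra.ι F MGen.y' * FreeAlgebra.ι F MGen.y) 1
  | ynx : MRel F q
      (FreeAlgebra.ι F MGen.y * FreeAlgebra.ι F MGen.nx * FreeAlgebra.ι F MGen.y')
      ((q ^ 2)⁻¹ • FreeAlgebra.ι F MGen.nx)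
  | ynz : MRel F q
      (FreeAlgebra.ι F MGen.y * FreeAlgebra.ι F MGen.nz * FreeAlgebra.ι F MGen.y')
      (q ^ 2 • FreeAlgebra.ι F MGen.nz)
  | nznx : MRel F q
      (q • (FreeAlgebra.ι F MGen.nz * FreeAlgebra.ι F MGen.nx)
        - q⁻¹ • (FreeAlgebra.ι F MGen.nx * FreeAlgebra.ι F MGen.nz))
      ((q - q⁻¹) • (1 - FreeAlgebra.ι F MGen.y * FreeAlgebra.ι F MGen.y))

/-- The algebra with the modified Chevalley presentation. -/
abbrev UMod (F : Type*) [Field F] (q : F) := RingQuot (MRel F q)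

noncomputable def mnx (F : Type*) [Field F] (q : F) : UMod F q :=
  RingQuot.mkAlgHom F (MRel F q) (FreeAlgebra.ι F MGen.nx)

noncomputable def my (F : Type*) [Field F] (q : F) : UMod F q :=
  RingQuot.mkAlgHom F (MRel F q) (FreeAlgebra.ι F MGen.y)

noncomputable def my' (F : Type*) [Field F] (q : F) : UMod F q :=
  RingQuot.mkAlgHom F (MRel F q) (FreeAlgebra.ι F MGen.y')

noncomputable def mnz (F : Type*) [Field F] (q : F) : UMod F q :=
  RingQuot.mkAlgHom F (MRel F q) (FreeAlgebra.ι F MGen.nz)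

section Aux
variable (F : Type*) [Field F] (q : F)

-- basic relations in UChev
lemma chev_kk' : ck F q * ck' F q = 1 := by
  rw [ck, ck', ← map_mul, RingQuot.mkAlgHom_rel F ChRel.kk', map_one]

lemma chev_k'k : ck' F q * ck F q = 1 := by
  rw [ck, ck', ← map_mul, RingQuot.mkAlgHom_rel F ChRel.k'k, map_one]

lemma chev_kek' : ck F q * ce F q * ck' F q = q ^ 2 • ce F q := by
  rw [ck, ce, ck', ← map_mul, ← map_mul, RingQuot.mkAlgHom_rel F ChRel.kek', map_smul]

lemma chev_kfk' : ck F q * cf F q * ck' F q = (q ^ 2)⁻¹ • cf F q := by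
  rw [ck, cf, ck', ← map_mul, ← map_mul, RingQuot.mkAlgHom_rel F ChRel.kfk', map_smul]

lemma chev_ef : (q - q⁻¹) • (ce F q * cf F q - cf F q * ce F q) = ck F q - ck' F q := by
  rw [ce, cf, ck, ck', ← map_mul, ← map_mul, ← map_sub, ← map_smul,
    RingQuot.mkAlgHom_rel F ChRel.ef, map_sub]

lemma chev_ke : ck F q * ce F q = q ^ 2 • (ce F q * ck F q) := by
  calc ck F q * ce F q = ck F q * ce F q * (ck' F q * ck F q) := by rw [chev_k'k, mul_one]
    _ = (ck F q * ce F q * ck' F q) * ck F q := by rw [mul_assoc, mul_assoc, mul_assoc]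
    _ = q ^ 2 • (ce F q * ck F q) := by rw [chev_kek', smul_mul_assoc]

lemma chev_ek (hq0 : q ≠ 0) : ce F q * ck F q = (q ^ 2)⁻¹ • (ck F q * ce F q) := by
  rw [chev_ke, smul_smul, inv_mul_cancel₀ (pow_ne_zero 2 hq0), one_smul]

-- basic relations in UMod
lemma mod_yy' : my F q * my' F q = 1 := by
  rw [my, my', ← map_mul, RingQuot.mkAlgHom_rel F MRel.yy', map_one]

lemma mod_y'y : my' F q * my F q = 1 := by
  rw [my, my', ← map_mul, RingQuot.mkAlgHom_rel F MRel.y'y, map_one]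

lemma mod_ynxy' : my F q * mnx F q * my' F q = (q ^ 2)⁻¹ • mnx F q := by
  rw [my, mnx, my', ← map_mul, ← map_mul, RingQuot.mkAlgHom_rel F MRel.ynx, map_smul]

lemma mod_ynzy' : my F q * mnz F q * my' F q = q ^ 2 • mnz F q := by
  rw [my, mnz, my', ← map_mul, ← map_mul, RingQuot.mkAlgHom_rel F MRel.ynz, map_smul]

lemma mod_nznx : q • (mnz F q * mnx F q) - q⁻¹ • (mnx F q * mnz F q)
    = (q - q⁻¹) • (1 - my F q * my F q) := by
  rw [mnz, mnx, my, ← map_mul, ← map_mul, ← map_mul, ← map_smul, ← map_smul, ← map_sub,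
    RingQuot.mkAlgHom_rel F MRel.nznx, map_smul, map_sub, map_one]

lemma mod_nxy' : mnx F q * my' F q = (q ^ 2)⁻¹ • (my' F q * mnx F q) := by
  calc mnx F q * my' F q = (my' F q * my F q) * (mnx F q * my' F q) := by
        rw [mod_y'y, one_mul]
    _ = my' F q * (my F q * mnx F q * my' F q) := by
        simp only [mul_assoc]
    _ = (q ^ 2)⁻¹ • (my' F q * mnx F q) := by rw [mod_ynxy', mul_smul_comm]

lemma mod_nzy' : mnz F q * my' F q = q ^ 2 • (my' F q * mnz F q) := by
  calc mnz F q * my' F q = (my' F q * my F q) * (mnz F q * my' F q) := by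
        rw [mod_y'y, one_mul]
    _ = my' F q * (my F q * mnz F q * my' F q) := by
        simp only [mul_assoc]
    _ = q ^ 2 • (my' F q * mnz F q) := by rw [mod_ynzy', mul_smul_comm]

/-- The images of the generators `ν_x, y, y⁻¹, ν_z` in `UChev`. -/
noncomputable def chImg : MGen → UChev F q
  | MGen.nx => (-(q * (q - q⁻¹))) • (ck F q * cf F q)
  | MGen.y => ck F q
  | MGen.y' => ck' F q
  | MGen.nz => (q - q⁻¹) • ce F q

/-- The images of the generators `e, f, k, k⁻¹` in `UMod`. -/
noncomputable def mImg : ChGen → UMod F q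
  | ChGen.e => (q - q⁻¹)⁻¹ • mnz F q
  | ChGen.f => (-(q⁻¹ * (q - q⁻¹)⁻¹)) • (my' F q * mnx F q)
  | ChGen.k => my F q
  | ChGen.k' => my' F q

noncomputable def phiF : FreeAlgebra F MGen →ₐ[F] UChev F q :=
  FreeAlgebra.lift F (chImg F q)

lemma phiF_rel (hq0 : q ≠ 0) (hd : q - q⁻¹ ≠ 0) :
    ∀ ⦃a b⦄, MRel F q a b → phiF F q a = phiF F q b := by
  intro a b h
  induction h with
  | yy' => simp [phiF, chImg, chev_kk']
  | y'y => simp [phiF, chImg, chev_k'k]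
  | ynx =>
      simp only [phiF, map_mul, map_smul, FreeAlgebra.lift_ι_apply, chImg,
        smul_mul_assoc, mul_smul_comm, smul_smul]
      have key : ck F q * (ck F q * cf F q) * ck' F q = (q ^ 2)⁻¹ • (ck F q * cf F q) := by
        calc ck F q * (ck F q * cf F q) * ck' F q
            = ck F q * (ck F q * cf F q * ck' F q) := by simp only [mul_assoc]
          _ = (q ^ 2)⁻¹ • (ck F q * cf F q) := by rw [chev_kfk', mul_smul_comm]
      rw [key, smul_smul]
      match_scalars
      ring
  | ynz =>
      simp only [phiF, map_mul, map_smul, FreeAlgebra.lift_ι_apply, chImg,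
        smul_mul_assoc, mul_smul_comm, smul_smul]
      rw [chev_kek', smul_smul]
      match_scalars
      ring
  | nznx =>
      simp only [phiF, map_mul, map_smul, map_sub, map_one, FreeAlgebra.lift_ι_apply, chImg]
      have hef : ce F q * cf F q = cf F q * ce F q
          + (q - q⁻¹)⁻¹ • ck F q - (q - q⁻¹)⁻¹ • ck' F q := by
        have h := congrArg (fun z => (q - q⁻¹)⁻¹ • z) (chev_ef F q)
        simp only [smul_smul, inv_mul_cancel₀ hd, one_smul, smul_sub] at h
        rw [sub_eq_iff_eq_add] at h
        rw [h]; abel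
      have h1 : ce F q * (ck F q * cf F q) = (q ^ 2)⁻¹ • (ck F q * (ce F q * cf F q)) := by
        rw [← mul_assoc, chev_ek F q hq0, smul_mul_assoc, mul_assoc]
      simp only [smul_smul, mul_smul_comm, smul_mul_assoc, mul_assoc]
      rw [h1, hef]
      simp only [mul_sub, mul_add, mul_smul_comm, chev_kk', smul_add, smul_sub, smul_smul]
      have h2 : q ^ 2 - 1 ≠ 0 := by
        have := mul_ne_zero hq0 hd
        rwa [mul_sub, mul_inv_cancel₀ hq0, ← sq] at this
      have h3 : -q ^ 2 + q ^ 4 ≠ 0 := by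
        have := mul_ne_zero (pow_ne_zero 2 hq0) h2
        intro h; apply this; linear_combination h
      have hA : (-q ^ 2 + q ^ 4) * (-q ^ 2 + q ^ 4)⁻¹ = 1 := mul_inv_cancel₀ h3
      have h4 : q ^ 2 * (q * q - 1) ≠ 0 :=
        mul_ne_zero (pow_ne_zero 2 hq0) (fun h => h2 (by linear_combination h))
      match_scalars <;> field_simp [h3] <;> (try rw [div_eq_iff h4]) <;> ring

noncomputable def phi (hq0 : q ≠ 0) (hd : q - q⁻¹ ≠ 0) : UMod F q →ₐ[F] UChev F q :=
  RingQuot.liftAlgHom F ⟨phiF F q, phiF_rel F q hq0 hd⟩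

lemma phi_gen (hq0 : q ≠ 0) (hd : q - q⁻¹ ≠ 0) (g : MGen) :
    phi F q hq0 hd (RingQuot.mkAlgHom F (MRel F q) (FreeAlgebra.ι F g)) = chImg F q g := by
  rw [phi, RingQuot.liftAlgHom_mkAlgHom_apply, phiF, FreeAlgebra.lift_ι_apply]

noncomputable def psiF : FreeAlgebra F ChGen →ₐ[F] UMod F q :=
  FreeAlgebra.lift F (mImg F q)

lemma psiF_rel (hq0 : q ≠ 0) (hd : q - q⁻¹ ≠ 0) :
    ∀ ⦃a b⦄, ChRel F q a b → psiF F q a = psiF F q b := by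
  intro a b h
  induction h with
  | kk' => simp [psiF, mImg, mod_yy']
  | k'k => simp [psiF, mImg, mod_y'y]
  | kek' =>
      simp only [psiF, map_mul, map_smul, FreeAlgebra.lift_ι_apply, mImg,
        smul_mul_assoc, mul_smul_comm, smul_smul]
      rw [mod_ynzy', smul_smul]
      match_scalars
      ring
  | kfk' =>
      simp only [psiF, map_mul, map_smul, FreeAlgebra.lift_ι_apply, mImg,
        smul_mul_assoc, mul_smul_comm, smul_smul]
      have key : my F q * (my' F q * mnx F q) * my' F q
          = (q ^ 2)⁻¹ • (my' F q * mnx F q) := by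
        calc my F q * (my' F q * mnx F q) * my' F q
            = (my F q * my' F q) * (mnx F q * my' F q) := by simp only [mul_assoc]
          _ = (q ^ 2)⁻¹ • (my' F q * mnx F q) := by rw [mod_yy', one_mul, mod_nxy']
      rw [key, smul_smul]
      match_scalars
      ring
  | ef =>
      simp only [psiF, map_mul, map_smul, map_sub, FreeAlgebra.lift_ι_apply, mImg,
        smul_sub, smul_smul, smul_mul_assoc, mul_smul_comm, mul_assoc]
      have key1 : mnz F q * (my' F q * mnx F q)
          = q ^ 2 • (my' F q * (mnz F q * mnx F q)) := by
        rw [← mul_assoc, mod_nzy', smul_mul_assoc, mul_assoc]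
      have hnz : mnz F q * mnx F q = (q⁻¹ * (q - q⁻¹)) • (1 - my F q * my F q)
          + (q⁻¹ * q⁻¹) • (mnx F q * mnz F q) := by
        have h := mod_nznx F q
        rw [sub_eq_iff_eq_add] at h
        have h2 := congrArg (fun z => q⁻¹ • z) h
        simp only [smul_add, smul_smul, inv_mul_cancel₀ hq0, one_smul] at h2
        exact h2
      rw [key1, hnz]
      have hY : my' F q * (my F q * my F q) = my F q := by
        rw [← mul_assoc, mod_y'y, one_mul]
      simp only [mul_add, mul_sub, mul_one, mul_smul_comm, smul_add, smul_sub, smul_smul, hY]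
      have h2 : q * q - 1 ≠ 0 := by
        have := mul_ne_zero hq0 hd
        rwa [mul_sub, mul_inv_cancel₀ hq0] at this
      have h3 : (q ^ 4 - q ^ 6 * 4 + (q ^ 8 * 6 - q ^ 10 * 4) + q ^ 12) ≠ 0 := by
        have h4 := mul_ne_zero (pow_ne_zero 4 hq0) (pow_ne_zero 4 h2)
        intro h; apply h4; linear_combination h
      have hB : (q ^ 4 - q ^ 6 * 4 + (q ^ 8 * 6 - q ^ 10 * 4) + q ^ 12)
          * (q ^ 4 - q ^ 6 * 4 + (q ^ 8 * 6 - q ^ 10 * 4) + q ^ 12)⁻¹ = 1 :=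
        mul_inv_cancel₀ h3
      have h2' : q ^ 2 - 1 ≠ 0 := by rw [sq]; exact h2
      match_scalars <;> field_simp [h2, h2'] <;>
        (try ring) <;> (first | linear_combination -hB | linear_combination hB)

noncomputable def psi (hq0 : q ≠ 0) (hd : q - q⁻¹ ≠ 0) : UChev F q →ₐ[F] UMod F q :=
  RingQuot.liftAlgHom F ⟨psiF F q, psiF_rel F q hq0 hd⟩

lemma psi_gen (hq0 : q ≠ 0) (hd : q - q⁻¹ ≠ 0) (g : ChGen) :
    psi F q hq0 hd (RingQuot.mkAlgHom F (ChRel F q) (FreeAlgebra.ι F g)) = mImg F q g := by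
  rw [psi, RingQuot.liftAlgHom_mkAlgHom_apply, psiF, FreeAlgebra.lift_ι_apply]

lemma psi_ce (hq0 : q ≠ 0) (hd : q - q⁻¹ ≠ 0) :
    psi F q hq0 hd (ce F q) = (q - q⁻¹)⁻¹ • mnz F q := psi_gen F q hq0 hd ChGen.e

lemma psi_cf (hq0 : q ≠ 0) (hd : q - q⁻¹ ≠ 0) :
    psi F q hq0 hd (cf F q) = (-(q⁻¹ * (q - q⁻¹)⁻¹)) • (my' F q * mnx F q) :=
  psi_gen F q hq0 hd ChGen.f

lemma psi_ck (hq0 : q ≠ 0) (hd : q - q⁻¹ ≠ 0) :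
    psi F q hq0 hd (ck F q) = my F q := psi_gen F q hq0 hd ChGen.k

lemma psi_ck' (hq0 : q ≠ 0) (hd : q - q⁻¹ ≠ 0) :
    psi F q hq0 hd (ck' F q) = my' F q := psi_gen F q hq0 hd ChGen.k'

lemma phi_mnx (hq0 : q ≠ 0) (hd : q - q⁻¹ ≠ 0) :
    phi F q hq0 hd (mnx F q) = (-(q * (q - q⁻¹))) • (ck F q * cf F q) :=
  phi_gen F q hq0 hd MGen.nx

lemma phi_my (hq0 : q ≠ 0) (hd : q - q⁻¹ ≠ 0) :
    phi F q hq0 hd (my F q) = ck F q := phi_gen F q hq0 hd MGen.y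

lemma phi_my' (hq0 : q ≠ 0) (hd : q - q⁻¹ ≠ 0) :
    phi F q hq0 hd (my' F q) = ck' F q := phi_gen F q hq0 hd MGen.y'

lemma phi_mnz (hq0 : q ≠ 0) (hd : q - q⁻¹ ≠ 0) :
    phi F q hq0 hd (mnz F q) = (q - q⁻¹) • ce F q := phi_gen F q hq0 hd MGen.nz

lemma phi_comp_psi (hq0 : q ≠ 0) (hd : q - q⁻¹ ≠ 0) :
    (phi F q hq0 hd).comp (psi F q hq0 hd) = AlgHom.id F (UChev F q) := by
  apply RingQuot.ringQuot_ext'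
  apply FreeAlgebra.hom_ext
  funext g
  simp only [Function.comp_apply, AlgHom.coe_comp, AlgHom.coe_id, id_eq]
  cases g with
  | e =>
      show phi F q hq0 hd (psi F q hq0 hd (ce F q)) = ce F q
      rw [psi_ce, map_smul, phi_mnz, smul_smul, inv_mul_cancel₀ hd, one_smul]
  | f =>
      show phi F q hq0 hd (psi F q hq0 hd (cf F q)) = cf F q
      rw [psi_cf, map_smul, map_mul, phi_my', phi_mnx, mul_smul_comm, smul_smul,
        ← mul_assoc, chev_k'k, one_mul,
        show -(q⁻¹ * (q - q⁻¹)⁻¹) * -(q * (q - q⁻¹)) = 1 by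
          field_simp
          exact div_self (by
            have := mul_ne_zero hq0 hd
            rwa [mul_sub, mul_inv_cancel₀ hq0, ← sq] at this), one_smul]
  | k =>
      show phi F q hq0 hd (psi F q hq0 hd (ck F q)) = ck F q
      rw [psi_ck, phi_my]
  | k' =>
      show phi F q hq0 hd (psi F q hq0 hd (ck' F q)) = ck' F q
      rw [psi_ck', phi_my']

lemma psi_comp_phi (hq0 : q ≠ 0) (hd : q - q⁻¹ ≠ 0) :
    (psi F q hq0 hd).comp (phi F q hq0 hd) = AlgHom.id F (UMod F q) := by
  apply RingQuot.ringQuot_ext'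
  apply FreeAlgebra.hom_ext
  funext g
  simp only [Function.comp_apply, AlgHom.coe_comp, AlgHom.coe_id, id_eq]
  cases g with
  | nx =>
      show psi F q hq0 hd (phi F q hq0 hd (mnx F q)) = mnx F q
      rw [phi_mnx, map_smul, map_mul, psi_ck, psi_cf, mul_smul_comm, smul_smul,
        ← mul_assoc, mod_yy', one_mul,
        show -(q * (q - q⁻¹)) * -(q⁻¹ * (q - q⁻¹)⁻¹) = 1 by
          field_simp
          exact div_self (by
            have := mul_ne_zero hq0 hd
            rwa [mul_sub, mul_inv_cancel₀ hq0, ← sq] at this), one_smul]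
  | y =>
      show psi F q hq0 hd (phi F q hq0 hd (my F q)) = my F q
      rw [phi_my, psi_ck]
  | y' =>
      show psi F q hq0 hd (phi F q hq0 hd (my' F q)) = my' F q
      rw [phi_my', psi_ck']
  | nz =>
      show psi F q hq0 hd (phi F q hq0 hd (mnz F q)) = mnz F q
      rw [phi_mnz, map_smul, psi_ce, smul_smul, mul_inv_cancel₀ hd, one_smul]

end Aux

/-- **Theorem 6.2 (modified Chevalley presentation).**
The algebra presented by generators `ν_x, y, y⁻¹, ν_z` and relations
`y y⁻¹ = y⁻¹ y = 1`, `y ν_x y⁻¹ = q⁻² ν_x`, `y ν_z y⁻¹ = q² ν_z`,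
`(q ν_z ν_x − q⁻¹ ν_x ν_z)/(q − q⁻¹) = 1 − y²` is isomorphic to `U_q(sl2)` in its
Chevalley presentation, via the isomorphism sending
`ν_x ↦ −q(q − q⁻¹) k f`, `y^{±1} ↦ k^{±1}`, `ν_z ↦ (q − q⁻¹) e`, whose
inverse sends `e ↦ (q − q⁻¹)⁻¹ ν_z`, `k^{±1} ↦ y^{±1}`,
`f ↦ −q⁻¹ (q − q⁻¹)⁻¹ y⁻¹ ν_x`. -/
theorem statement0 (F : Type*) [Field F] (q : F) (hq0 : q ≠ 0) (hq4 : q ^ 4 ≠ 1) :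
    ∃ e : UMod F q ≃ₐ[F] UChev F q,
      e (mnx F q) = (-(q * (q - q⁻¹))) • (ck F q * cf F q) ∧
      e (my F q) = ck F q ∧
      e (my' F q) = ck' F q ∧
      e (mnz F q) = (q - q⁻¹) • ce F q ∧
      e.symm (ce F q) = (q - q⁻¹)⁻¹ • mnz F q ∧
      e.symm (ck F q) = my F q ∧
      e.symm (ck' F q) = my' F q ∧
      e.symm (cf F q) = (-(q⁻¹ * (q - q⁻¹)⁻¹)) • (my' F q * mnx F q) := by
  have hd : q - q⁻¹ ≠ 0 := by
    intro h
    apply hq4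
    have h2 := sub_eq_zero.mp h
    have h1 : q * q = 1 := by
      nth_rewrite 2 [h2]
      exact mul_inv_cancel₀ hq0
    rw [show q ^ 4 = (q * q) * (q * q) by ring, h1, one_mul]
  refine ⟨AlgEquiv.ofAlgHom (phi F q hq0 hd) (psi F q hq0 hd)
    (phi_comp_psi F q hq0 hd) (psi_comp_phi F q hq0 hd), ?_, ?_, ?_, ?_, ?_, ?_, ?_, ?_⟩
  · exact phi_mnx F q hq0 hd
  · exact phi_my F q hq0 hd
  · exact phi_my' F q hq0 hd
  · exact phi_mnz F q hq0 hd
  · rw [AlgEquiv.ofAlgHom_symm]; exact psi_ce F q hq0 hd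
  · rw [AlgEquiv.ofAlgHom_symm]; exact psi_ck F q hq0 hd
  · rw [AlgEquiv.ofAlgHom_symm]; exact psi_ck' F q hq0 hd
  · rw [AlgEquiv.ofAlgHom_symm]; exact psi_cf F q hq0 hd

end Paper
end

section
/- The monomials x^r ȳ^s z^t, for r, s, t ranging over the natural numbers, form a basis of the 𝔽-vector space Ū_q. -/
namespace Paper

/-- Generators for the algebra `Ū_q`: `x`, `ȳ`, `z`. -/
inductive BGen : Type
  | x | y | z

/-- The defining relations of `Ū_q`:
`(q ȳ x − q⁻¹ x ȳ)/(q − q⁻¹) = ȳ²`, `(q z ȳ − q⁻¹ ȳ z)/(q − q⁻¹) = ȳ²`,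
`(q z x − q⁻¹ x z)/(q − q⁻¹) = 1`. -/
inductive BRel (F : Type*) [Field F] (q : F) :
    FreeAlgebra F BGen → FreeAlgebra F BGen → Prop
  | yx : BRel F q
      (q • (FreeAlgebra.ι F BGen.y * FreeAlgebra.ι F BGen.x)
        - q⁻¹ • (FreeAlgebra.ι F BGen.x * FreeAlgebra.ι F BGen.y))
      ((q - q⁻¹) • (FreeAlgebra.ι F BGen.y * FreeAlgebra.ι F BGen.y))
  | zy : BRel F q
      (q • (FreeAlgebra.ι F BGen.z * FreeAlgebra.ι F BGen.y)
        - q⁻¹ • (FreeAlgebra.ι F BGen.y * FreeAlgebra.ι F BGen.z))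
      ((q - q⁻¹) • (FreeAlgebra.ι F BGen.y * FreeAlgebra.ι F BGen.y))
  | zx : BRel F q
      (q • (FreeAlgebra.ι F BGen.z * FreeAlgebra.ι F BGen.x)
        - q⁻¹ • (FreeAlgebra.ι F BGen.x * FreeAlgebra.ι F BGen.z))
      ((q - q⁻¹) • (1 : FreeAlgebra F BGen))

/-- The algebra `Ū_q`. -/
abbrev Ubar (F : Type*) [Field F] (q : F) := RingQuot (BRel F q)

noncomputable def bx (F : Type*) [Field F] (q : F) : Ubar F q :=
  RingQuot.mkAlgHom F (BRel F q) (FreeAlgebra.ι F BGen.x)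

noncomputable def bybar (F : Type*) [Field F] (q : F) : Ubar F q :=
  RingQuot.mkAlgHom F (BRel F q) (FreeAlgebra.ι F BGen.y)

noncomputable def bz (F : Type*) [Field F] (q : F) : Ubar F q :=
  RingQuot.mkAlgHom F (BRel F q) (FreeAlgebra.ι F BGen.z)

section Rep

variable (F : Type*) [Field F] (q : F)

/-- the module with basis indexed by `(s,r,t)` standing for `y^s x^r z^t` -/
abbrev MM := (ℕ × ℕ × ℕ) →₀ F

noncomputable def ee (i : ℕ × ℕ × ℕ) : MM F := Finsupp.single i 1

/-- images of the generators on basis vectors -/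
noncomputable def fg : BGen → (ℕ × ℕ × ℕ) → MM F
  | .y => fun i => ee F (i.1 + 1, i.2.1, i.2.2)
  | .x => fun i => q ^ (2 * i.1) • ee F (i.1, i.2.1 + 1, i.2.2)
      + (1 - q ^ (2 * i.1)) • ee F (i.1 + 1, i.2.1, i.2.2)
  | .z => fun i => (q⁻¹) ^ (2 * (i.2.1 + i.1)) • ee F (i.1, i.2.1, i.2.2 + 1)
      + ((q⁻¹) ^ (2 * i.1) * (1 - (q⁻¹) ^ (2 * i.2.1))) • ee F (i.1, i.2.1 - 1, i.2.2)
      + (1 - (q⁻¹) ^ (2 * i.1)) • ee F (i.1 + 1, i.2.1, i.2.2)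

@[simp] lemma fg_y (s r t : ℕ) : fg F q .y (s, r, t) = ee F (s + 1, r, t) := rfl

@[simp] lemma fg_x (s r t : ℕ) : fg F q .x (s, r, t)
    = q ^ (2 * s) • ee F (s, r + 1, t) + (1 - q ^ (2 * s)) • ee F (s + 1, r, t) := rfl

@[simp] lemma fg_z (s r t : ℕ) : fg F q .z (s, r, t)
    = (q⁻¹) ^ (2 * (r + s)) • ee F (s, r, t + 1)
      + ((q⁻¹) ^ (2 * s) * (1 - (q⁻¹) ^ (2 * r))) • ee F (s, r - 1, t)
      + (1 - (q⁻¹) ^ (2 * s)) • ee F (s + 1, r, t) := rfl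

noncomputable def LL (g : BGen) : Module.End F (MM F) :=
  Finsupp.linearCombination F (fg F q g)

@[simp] lemma LL_ee (g : BGen) (i : ℕ × ℕ × ℕ) : LL F q g (ee F i) = fg F q g i := by
  simp [LL, ee, Finsupp.linearCombination_single]

noncomputable def rho : FreeAlgebra F BGen →ₐ[F] Module.End F (MM F) :=
  FreeAlgebra.lift F (LL F q)

@[simp] lemma rho_ι (g : BGen) : rho F q (FreeAlgebra.ι F g) = LL F q g :=
  FreeAlgebra.lift_ι_apply _ _

set_option maxHeartbeats 1000000 in
theorem rho_rel (hq0 : q ≠ 0) : ∀ ⦃a b : FreeAlgebra F BGen⦄, BRel F q a b → rho F q a = rho F q b := by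
  have hee : ∀ i, (Finsupp.basisSingleOne (R := F) (ι := ℕ × ℕ × ℕ)) i = ee F i := by
    intro i; simp [ee]
  intro a b h
  induction h with
  | yx =>
    apply Finsupp.basisSingleOne.ext
    rintro ⟨s, r, t⟩
    rw [hee]
    simp only [map_sub, map_smul, map_mul, rho_ι,
      LinearMap.sub_apply, LinearMap.smul_apply, Module.End.mul_apply, LL_ee, map_add,
      fg_y, fg_x, fg_z]
    match_scalars <;>
      first
      | ring1
      | (simp only [mul_one, one_mul, inv_pow]; rw [sub_eq_zero]; field_simp; ring1)
      | (field_simp; first | ring1 | (rw [div_eq_iff (by simp [hq0, pow_ne_zero])]; ring1))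
      | (field_simp; simp only [one_div, inv_pow, mul_add, pow_add, pow_mul]; field_simp <;> ring1)
      | (field_simp; tauto)
  | zy =>
    apply Finsupp.basisSingleOne.ext
    rintro ⟨s, r, t⟩
    rw [hee]
    simp only [map_sub, map_smul, map_mul, rho_ι,
      LinearMap.sub_apply, LinearMap.smul_apply, Module.End.mul_apply, LL_ee, map_add,
      fg_y, fg_x, fg_z]
    match_scalars <;>
      first
      | ring1
      | (simp only [mul_one, one_mul, inv_pow]; rw [sub_eq_zero]; field_simp; ring1)
      | (field_simp; first | ring1 | (rw [div_eq_iff (by simp [hq0, pow_ne_zero])]; ring1))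
      | (field_simp; simp only [one_div, inv_pow, mul_add, pow_add, pow_mul]; field_simp <;> ring1)
      | (field_simp; tauto)
  | zx =>
    apply Finsupp.basisSingleOne.ext
    rintro ⟨s, r, t⟩
    rw [hee]
    rcases r with _ | r <;>
    · simp only [map_sub, map_smul, map_mul, map_one, rho_ι,
        LinearMap.sub_apply, LinearMap.smul_apply, Module.End.mul_apply, Module.End.one_apply,
        LL_ee, map_add, fg_y, fg_x, fg_z, Nat.add_sub_cancel, Nat.zero_sub, Nat.sub_zero,
        mul_zero, pow_zero, sub_self, zero_smul, smul_zero, add_zero, zero_add, zero_mul,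
        mul_one, one_smul]
      match_scalars <;>
      first
      | ring1
      | (simp only [mul_one, one_mul, inv_pow]; rw [sub_eq_zero]; field_simp; ring1)
      | (field_simp; first | ring1 | (rw [div_eq_iff (by simp [hq0, pow_ne_zero])]; ring1))
      | (field_simp; simp only [one_div, inv_pow, mul_add, pow_add, pow_mul]; field_simp <;> ring1)
      | (field_simp; tauto)

noncomputable def lrho (hq0 : q ≠ 0) : Ubar F q →ₐ[F] Module.End F (MM F) :=
  RingQuot.liftAlgHom F ⟨rho F q, rho_rel F q hq0⟩

variable {hq0 : q ≠ 0}

lemma lrho_bx (hq0 : q ≠ 0) (i : ℕ × ℕ × ℕ) :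
    lrho F q hq0 (bx F q) (ee F i) = fg F q .x i := by
  rw [lrho, bx, RingQuot.liftAlgHom_mkAlgHom_apply, rho_ι, LL_ee]

lemma lrho_by (hq0 : q ≠ 0) (i : ℕ × ℕ × ℕ) :
    lrho F q hq0 (bybar F q) (ee F i) = fg F q .y i := by
  rw [lrho, bybar, RingQuot.liftAlgHom_mkAlgHom_apply, rho_ι, LL_ee]

lemma lrho_bz (hq0 : q ≠ 0) (i : ℕ × ℕ × ℕ) :
    lrho F q hq0 (bz F q) (ee F i) = fg F q .z i := by
  rw [lrho, bz, RingQuot.liftAlgHom_mkAlgHom_apply, rho_ι, LL_ee]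

lemma lrho_bx_eq (hq0 : q ≠ 0) : lrho F q hq0 (bx F q) = LL F q .x := by
  rw [lrho, bx, RingQuot.liftAlgHom_mkAlgHom_apply, rho_ι]

/-- the monomial family -/
noncomputable def vv : ℕ × ℕ × ℕ → Ubar F q :=
  fun i => bx F q ^ i.1 * bybar F q ^ i.2.1 * bz F q ^ i.2.2

/-- elements vanishing at all indices with first coordinate at most `s` -/
def UU (s : ℕ) : Submodule F (MM F) where
  carrier := {m | ∀ i : ℕ × ℕ × ℕ, i.1 ≤ s → m i = 0}
  add_mem' := fun {a b} ha hb i hi => by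
    simp only [Finsupp.coe_add, Pi.add_apply, ha i hi, hb i hi, add_zero]
  zero_mem' := fun i hi => rfl
  smul_mem' := fun c m hm i hi => by
    simp only [Finsupp.coe_smul, Pi.smul_apply, hm i hi, smul_zero]

lemma ee_mem_UU {s s' : ℕ} (h : s < s') (r t : ℕ) : ee F (s', r, t) ∈ UU F s := by
  intro i hi
  rw [ee, Finsupp.single_apply, if_neg]
  rintro rfl
  simp only at hi
  omega

lemma fg_vanish (g : BGen) (j i : ℕ × ℕ × ℕ) (h : i.1 < j.1) : fg F q g j i = 0 := by
  obtain ⟨a, b, c⟩ := j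
  have h1 : ∀ u : ℕ × ℕ × ℕ, u.1 = a ∨ u.1 = a + 1 → ee F u i = 0 := by
    intro u hu
    rw [ee, Finsupp.single_apply, if_neg]
    rintro rfl
    simp only at h
    omega
  cases g with
  | y => simpa using h1 (a + 1, b, c) (Or.inr rfl)
  | x =>
    rw [fg_x, Finsupp.add_apply, Finsupp.smul_apply, Finsupp.smul_apply,
      h1 (a, b + 1, c) (Or.inl rfl), h1 (a + 1, b, c) (Or.inr rfl)]
    simp
  | z =>
    rw [fg_z, Finsupp.add_apply, Finsupp.add_apply, Finsupp.smul_apply, Finsupp.smul_apply,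
      Finsupp.smul_apply, h1 (a, b, c + 1) (Or.inl rfl), h1 (a, b - 1, c) (Or.inl rfl),
      h1 (a + 1, b, c) (Or.inr rfl)]
    simp

lemma LL_mem_UU {s : ℕ} {m : MM F} (hm : m ∈ UU F s) (g : BGen) :
    LL F q g m ∈ UU F s := by
  intro i hi
  rw [LL, Finsupp.linearCombination_apply, Finsupp.sum, Finsupp.finset_sum_apply]
  apply Finset.sum_eq_zero
  intro j hj
  have hs : s < j.1 := by
    by_contra hle
    push_neg at hle
    exact (Finsupp.mem_support_iff.mp hj) (hm j hle)
  rw [Finsupp.smul_apply, fg_vanish F q g j i (lt_of_le_of_lt hi hs), smul_zero]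

lemma lrho_z_pow (hq0 : q ≠ 0) (t : ℕ) :
    lrho F q hq0 (bz F q ^ t) (ee F (0, 0, 0)) = ee F (0, 0, t) := by
  induction t with
  | zero => simp
  | succ t ih =>
    rw [pow_succ', map_mul, Module.End.mul_apply, ih, lrho_bz F q hq0, fg_z]
    simp

lemma lrho_yz_pow (hq0 : q ≠ 0) (s t : ℕ) :
    lrho F q hq0 (bybar F q ^ s * bz F q ^ t) (ee F (0, 0, 0)) = ee F (s, 0, t) := by
  induction s with
  | zero => rw [pow_zero, one_mul, lrho_z_pow]
  | succ s ih =>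
    rw [pow_succ', mul_assoc, map_mul, Module.End.mul_apply, ih, lrho_by F q hq0, fg_y]

lemma lrho_vv (hq0 : q ≠ 0) (r s t : ℕ) :
    ∃ u ∈ UU F s, lrho F q hq0 (vv F q (r, s, t)) (ee F (0, 0, 0))
      = q ^ (2 * s * r) • ee F (s, r, t) + u := by
  induction r with
  | zero =>
    refine ⟨0, zero_mem _, ?_⟩
    rw [vv]
    simp only [pow_zero, one_mul, mul_zero]
    rw [lrho_yz_pow F q hq0 s t]
    simp
  | succ r ih =>
    obtain ⟨u, hu, heq⟩ := ih
    refine ⟨(q ^ (2 * s * r) * (1 - q ^ (2 * s))) • ee F (s + 1, r, t)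
        + lrho F q hq0 (bx F q) u, ?_, ?_⟩
    · exact add_mem (Submodule.smul_mem _ _ (ee_mem_UU F (Nat.lt_succ_self s) r t))
        (by rw [lrho_bx_eq F q hq0]; exact LL_mem_UU F q hu .x)
    · have hv : vv F q (r + 1, s, t) = bx F q * vv F q (r, s, t) := by
        rw [vv, vv]
        simp only
        rw [← mul_assoc, ← mul_assoc, ← pow_succ']
      rw [hv, map_mul, Module.End.mul_apply, heq, map_add, map_smul, lrho_bx F q hq0, fg_x]
      match_scalars <;> ring1

lemma eval_lt (hq0 : q ≠ 0) {s s' : ℕ} (h : s < s') (r' t' r t : ℕ) :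
    lrho F q hq0 (vv F q (r', s', t')) (ee F (0, 0, 0)) (s, r, t) = 0 := by
  obtain ⟨u, hu, heq⟩ := lrho_vv F q hq0 r' s' t'
  rw [heq, Finsupp.add_apply, Finsupp.smul_apply, hu (s, r, t) (le_of_lt h),
    ee, Finsupp.single_apply, if_neg (by intro h'; simp only [Prod.mk.injEq] at h'; omega)]
  simp

lemma eval_self (hq0 : q ≠ 0) (s r t : ℕ) :
    lrho F q hq0 (vv F q (r, s, t)) (ee F (0, 0, 0)) (s, r, t) = q ^ (2 * s * r) := by
  obtain ⟨u, hu, heq⟩ := lrho_vv F q hq0 r s t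
  rw [heq, Finsupp.add_apply, Finsupp.smul_apply, hu (s, r, t) le_rfl,
    ee, Finsupp.single_apply, if_pos rfl]
  simp

lemma eval_ne (hq0 : q ≠ 0) {s r' t' r t : ℕ} (h : ¬(r' = r ∧ t' = t)) :
    lrho F q hq0 (vv F q (r', s, t')) (ee F (0, 0, 0)) (s, r, t) = 0 := by
  obtain ⟨u, hu, heq⟩ := lrho_vv F q hq0 r' s t'
  rw [heq, Finsupp.add_apply, Finsupp.smul_apply, hu (s, r, t) le_rfl,
    ee, Finsupp.single_apply,
    if_neg (by intro h'; simp only [Prod.mk.injEq] at h'; exact h ⟨h'.2.1, h'.2.2⟩)]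
  simp

lemma vv_li (hq0 : q ≠ 0) : LinearIndependent F (vv F q) := by
  rw [linearIndependent_iff]
  intro l hl
  have key : ∀ s r t : ℕ, l (r, s, t) = 0 := by
    intro s
    induction s using Nat.strong_induction_on with
    | _ s IH =>
      intro r t
      have h0 : lrho F q hq0 (Finsupp.linearCombination F (vv F q) l) (ee F (0, 0, 0)) (s, r, t)
          = 0 := by rw [hl]; simp
      rw [Finsupp.linearCombination_apply, Finsupp.sum, map_sum, LinearMap.sum_apply,
        Finsupp.finset_sum_apply] at h0
      have hsum : ∀ j ∈ l.support, j ≠ ((r, s, t) : ℕ × ℕ × ℕ) →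
          (lrho F q hq0 (l j • vv F q j) (ee F (0, 0, 0))) (s, r, t) = 0 := by
        rintro ⟨r₁, s₁, t₁⟩ hj hne
        rw [map_smul, LinearMap.smul_apply, Finsupp.smul_apply]
        rcases lt_trichotomy s₁ s with h | h | h
        · rw [IH s₁ h r₁ t₁, zero_smul]
        · subst h
          rw [eval_ne F q hq0 (by intro ⟨h1, h2⟩; exact hne (by rw [h1, h2])), smul_zero]
        · rw [eval_lt F q hq0 h, smul_zero]
      rw [Finset.sum_eq_single ((r, s, t) : ℕ × ℕ × ℕ) hsum (fun hns => by
        rw [Finsupp.notMem_support_iff.mp hns, zero_smul, map_zero]; simp)] at h0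
      rw [map_smul, LinearMap.smul_apply, Finsupp.smul_apply, eval_self F q hq0,
        smul_eq_mul] at h0
      exact (mul_eq_zero.mp h0).resolve_right (pow_ne_zero _ hq0)
  ext i
  obtain ⟨r, s, t⟩ := i
  exact key s r t

section Span

/-- monomials with `x`-degree at most `n` -/
noncomputable def Sle (n : ℕ) : Submodule F (Ubar F q) :=
  Submodule.span F (vv F q '' {i | i.1 ≤ n})

lemma Sle_mono {m n : ℕ} (h : m ≤ n) : Sle F q m ≤ Sle F q n :=
  Submodule.span_mono (Set.image_mono fun _ hi => le_trans hi h)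

lemma vv_mem_Sle {n r : ℕ} (hr : r ≤ n) (s t : ℕ) : vv F q (r, s, t) ∈ Sle F q n :=
  Submodule.subset_span ⟨(r, s, t), hr, rfl⟩

lemma ubar_rel_yx (hq0 : q ≠ 0) :
    bybar F q * bx F q = (q⁻¹ * (q - q⁻¹)) • (bybar F q * bybar F q)
      + (q⁻¹ * q⁻¹) • (bx F q * bybar F q) := by
  have h := RingQuot.mkAlgHom_rel F (BRel.yx (F := F) (q := q))
  rw [map_sub, map_smul, map_smul, map_smul, map_mul, map_mul, map_mul,
    sub_eq_iff_eq_add] at h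
  have h2 := congrArg (fun w => q⁻¹ • w) h
  simp only [smul_smul, inv_mul_cancel₀ hq0, one_smul, smul_add] at h2
  rw [← bx, ← bybar] at h2
  exact h2

lemma ubar_rel_zy (hq0 : q ≠ 0) :
    bz F q * bybar F q = (q⁻¹ * (q - q⁻¹)) • (bybar F q * bybar F q)
      + (q⁻¹ * q⁻¹) • (bybar F q * bz F q) := by
  have h := RingQuot.mkAlgHom_rel F (BRel.zy (F := F) (q := q))
  rw [map_sub, map_smul, map_smul, map_smul, map_mul, map_mul, map_mul,
    sub_eq_iff_eq_add] at h
  have h2 := congrArg (fun w => q⁻¹ • w) h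
  simp only [smul_smul, inv_mul_cancel₀ hq0, one_smul, smul_add] at h2
  rw [← bz, ← bybar] at h2
  exact h2

lemma ubar_rel_zx (hq0 : q ≠ 0) :
    bz F q * bx F q = (q⁻¹ * (q - q⁻¹)) • (1 : Ubar F q)
      + (q⁻¹ * q⁻¹) • (bx F q * bz F q) := by
  have h := RingQuot.mkAlgHom_rel F (BRel.zx (F := F) (q := q))
  rw [map_sub, map_smul, map_smul, map_smul, map_mul, map_mul, map_one,
    sub_eq_iff_eq_add] at h
  have h2 := congrArg (fun w => q⁻¹ • w) h
  simp only [smul_smul, inv_mul_cancel₀ hq0, one_smul, smul_add] at h2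
  rw [← bz, ← bx] at h2
  exact h2

lemma x_mul_vv (r s t : ℕ) : bx F q * vv F q (r, s, t) = vv F q (r + 1, s, t) := by
  rw [vv, vv]
  simp only
  rw [← mul_assoc, ← mul_assoc, ← pow_succ']

lemma y_mul_vv0 (s t : ℕ) : bybar F q * vv F q (0, s, t) = vv F q (0, s + 1, t) := by
  rw [vv, vv]
  simp only [pow_zero, one_mul]
  rw [← mul_assoc, ← pow_succ']

lemma x_mul_Sle {n : ℕ} {m : Ubar F q} (hm : m ∈ Sle F q n) :
    bx F q * m ∈ Sle F q (n + 1) := by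
  refine Submodule.span_induction ?_ ?_ ?_ ?_ hm
  · rintro _ ⟨⟨a, b, c⟩, ha, rfl⟩
    rw [x_mul_vv]
    exact vv_mem_Sle F q (by exact Nat.succ_le_succ ha) b c
  · rw [mul_zero]; exact zero_mem _
  · intro a b _ _ pa pb
    rw [mul_add]; exact add_mem pa pb
  · intro a x _ px
    rw [mul_smul_comm]; exact Submodule.smul_mem _ _ px

lemma y_mul_vv (hq0 : q ≠ 0) : ∀ r s t : ℕ, bybar F q * vv F q (r, s, t) ∈ Sle F q r := by
  intro r
  induction r using Nat.strong_induction_on with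
  | _ r IH =>
    match r with
    | 0 =>
      intro s t
      rw [y_mul_vv0]
      exact vv_mem_Sle F q le_rfl (s + 1) t
    | Nat.succ r =>
      intro s t
      have hyS : ∀ m ∈ Sle F q r, bybar F q * m ∈ Sle F q r := by
        intro m hm
        refine Submodule.span_induction ?_ ?_ ?_ ?_ hm
        · rintro _ ⟨⟨a, b, c⟩, ha, rfl⟩
          exact Sle_mono F q ha (IH a (Nat.lt_succ_of_le ha) b c)
        · rw [mul_zero]; exact zero_mem _
        · intro a b _ _ pa pb
          rw [mul_add]; exact add_mem pa pb
        · intro a x _ px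
          rw [mul_smul_comm]; exact Submodule.smul_mem _ _ px
      have h1 : bybar F q * vv F q (r, s, t) ∈ Sle F q r := IH r (Nat.lt_succ_self r) s t
      rw [← x_mul_vv, ← mul_assoc, ubar_rel_yx F q hq0, add_mul, smul_mul_assoc,
        smul_mul_assoc, mul_assoc, mul_assoc]
      exact add_mem
        (Submodule.smul_mem _ _ (Sle_mono F q (Nat.le_succ r) (hyS _ h1)))
        (Submodule.smul_mem _ _ (x_mul_Sle F q h1))

lemma y_mul_Sle (hq0 : q ≠ 0) {n : ℕ} {m : Ubar F q} (hm : m ∈ Sle F q n) :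
    bybar F q * m ∈ Sle F q n := by
  refine Submodule.span_induction ?_ ?_ ?_ ?_ hm
  · rintro _ ⟨⟨a, b, c⟩, ha, rfl⟩
    exact Sle_mono F q ha (y_mul_vv F q hq0 a b c)
  · rw [mul_zero]; exact zero_mem _
  · intro a b _ _ pa pb
    rw [mul_add]; exact add_mem pa pb
  · intro a x _ px
    rw [mul_smul_comm]; exact Submodule.smul_mem _ _ px

lemma z_mul_vv0 (hq0 : q ≠ 0) : ∀ s t : ℕ, bz F q * vv F q (0, s, t) ∈ Sle F q 0 := by
  intro s
  induction s with
  | zero =>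
    intro t
    have : bz F q * vv F q (0, 0, t) = vv F q (0, 0, t + 1) := by
      rw [vv, vv]
      simp only [pow_zero, one_mul]
      rw [← pow_succ']
    rw [this]
    exact vv_mem_Sle F q le_rfl 0 (t + 1)
  | succ s ihs =>
    intro t
    rw [← y_mul_vv0, ← mul_assoc, ubar_rel_zy F q hq0, add_mul, smul_mul_assoc,
      smul_mul_assoc, mul_assoc, mul_assoc]
    refine add_mem (Submodule.smul_mem _ _ ?_) (Submodule.smul_mem _ _ ?_)
    · rw [y_mul_vv0, y_mul_vv0]
      exact vv_mem_Sle F q le_rfl (s + 2) t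
    · exact y_mul_Sle F q hq0 (ihs t)

lemma z_mul_vv (hq0 : q ≠ 0) : ∀ r s t : ℕ, bz F q * vv F q (r, s, t) ∈ Sle F q r := by
  intro r
  induction r with
  | zero => exact z_mul_vv0 F q hq0
  | succ r ih =>
    intro s t
    rw [← x_mul_vv, ← mul_assoc, ubar_rel_zx F q hq0, add_mul, smul_mul_assoc,
      smul_mul_assoc, one_mul, mul_assoc]
    refine add_mem (Submodule.smul_mem _ _ ?_) (Submodule.smul_mem _ _ ?_)
    · exact vv_mem_Sle F q (Nat.le_succ r) s t
    · exact x_mul_Sle F q (ih s t)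

lemma Sle_le_span (n : ℕ) : Sle F q n ≤ Submodule.span F (Set.range (vv F q)) :=
  Submodule.span_mono (Set.image_subset_range _ _)

lemma gen_mul_span (hq0 : q ≠ 0) (g : BGen) {m : Ubar F q}
    (hm : m ∈ Submodule.span F (Set.range (vv F q))) :
    RingQuot.mkAlgHom F (BRel F q) (FreeAlgebra.ι F g) * m
      ∈ Submodule.span F (Set.range (vv F q)) := by
  refine Submodule.span_induction ?_ ?_ ?_ ?_ hm
  · rintro _ ⟨⟨a, b, c⟩, rfl⟩
    cases g with
    | x =>
      rw [show RingQuot.mkAlgHom F (BRel F q) (FreeAlgebra.ι F BGen.x) = bx F q from rfl,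
        x_mul_vv]
      exact Submodule.subset_span ⟨_, rfl⟩
    | y =>
      exact Sle_le_span F q a (y_mul_vv F q hq0 a b c)
    | z =>
      exact Sle_le_span F q a (z_mul_vv F q hq0 a b c)
  · rw [mul_zero]; exact zero_mem _
  · intro a b _ _ pa pb
    rw [mul_add]; exact add_mem pa pb
  · intro a x _ px
    rw [mul_smul_comm]; exact Submodule.smul_mem _ _ px

lemma vv_span (hq0 : q ≠ 0) : ⊤ ≤ Submodule.span F (Set.range (vv F q)) := by
  have hmul : ∀ a : FreeAlgebra F BGen, ∀ m ∈ Submodule.span F (Set.range (vv F q)),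
      RingQuot.mkAlgHom F (BRel F q) a * m ∈ Submodule.span F (Set.range (vv F q)) := by
    intro a
    induction a using FreeAlgebra.induction with
    | grade0 c =>
      intro m hm
      rw [AlgHom.commutes, ← Algebra.smul_def]
      exact Submodule.smul_mem _ _ hm
    | grade1 g => exact fun m hm => gen_mul_span F q hq0 g hm
    | mul a b iha ihb =>
      intro m hm
      rw [map_mul, mul_assoc]
      exact iha _ (ihb m hm)
    | add a b iha ihb =>
      intro m hm
      rw [map_add, add_mul]
      exact add_mem (iha m hm) (ihb m hm)
  intro u _
  obtain ⟨a, rfl⟩ := RingQuot.mkAlgHom_surjective F (BRel F q) u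
  have h1 : (1 : Ubar F q) ∈ Submodule.span F (Set.range (vv F q)) := by
    have : (1 : Ubar F q) = vv F q (0, 0, 0) := by rw [vv]; simp
    rw [this]
    exact Submodule.subset_span ⟨_, rfl⟩
  simpa using hmul a 1 h1

end Span

end Rep

/-- **Lemma 10.4.** The monomials `x^r ȳ^s z^t` (`r, s, t ∈ ℕ`) form a basis of the
`𝔽`-vector space `Ū_q`. -/
theorem statement6 (F : Type*) [Field F] (q : F) (hq0 : q ≠ 0) (hq4 : q ^ 4 ≠ 1) :
    ∃ b : Module.Basis (ℕ × ℕ × ℕ) F (Ubar F q),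
      ∀ r s t : ℕ, b (r, s, t) = bx F q ^ r * bybar F q ^ s * bz F q ^ t := by
  refine ⟨Module.Basis.mk (vv_li F q hq0) (vv_span F q hq0), fun r s t => ?_⟩
  rw [Module.Basis.mk_apply]
  rfl

end Paper
end

section
/- (i) The subalgebra U_even of U_q(𝔰𝔩₂) is generated as an 𝔽-algebra by ν_x, ν_y, ν_z, y⁻². (ii) The subalgebra U′_even is generated as an 𝔽-algebra by ν_x, ν_y, ν_z. -/
namespace Paper


/-- Generators for the equitable presentation of `U_q(sl2)`: `x`, `y`, `y⁻¹`, `z`. -/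
inductive EqGen : Type
  | x | y | y' | z

/-- The defining relations of the equitable presentation of `U_q(sl2)`. -/
inductive EqRel (F : Type*) [Field F] (q : F) :
    FreeAlgebra F EqGen → FreeAlgebra F EqGen → Prop
  | yy' : EqRel F q (FreeAlgebra.ι F EqGen.y * FreeAlgebra.ι F EqGen.y') 1
  | y'y : EqRel F q (FreeAlgebra.ι F EqGen.y' * FreeAlgebra.ι F EqGen.y) 1
  | xy : EqRel F q
      (q • (FreeAlgebra.ι F EqGen.x * FreeAlgebra.ι F EqGen.y)
        - q⁻¹ • (FreeAlgebra.ι F EqGen.y * FreeAlgebra.ι F EqGen.x))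
      ((q - q⁻¹) • (1 : FreeAlgebra F EqGen))
  | yz : EqRel F q
      (q • (FreeAlgebra.ι F EqGen.y * FreeAlgebra.ι F EqGen.z)
        - q⁻¹ • (FreeAlgebra.ι F EqGen.z * FreeAlgebra.ι F EqGen.y))
      ((q - q⁻¹) • (1 : FreeAlgebra F EqGen))
  | zx : EqRel F q
      (q • (FreeAlgebra.ι F EqGen.z * FreeAlgebra.ι F EqGen.x)
        - q⁻¹ • (FreeAlgebra.ι F EqGen.x * FreeAlgebra.ι F EqGen.z))
      ((q - q⁻¹) • (1 : FreeAlgebra F EqGen))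

/-- `U_q(sl2)` in its equitable presentation. -/
abbrev Usl2 (F : Type*) [Field F] (q : F) := RingQuot (EqRel F q)

noncomputable def ux (F : Type*) [Field F] (q : F) : Usl2 F q :=
  RingQuot.mkAlgHom F (EqRel F q) (FreeAlgebra.ι F EqGen.x)

noncomputable def uy (F : Type*) [Field F] (q : F) : Usl2 F q :=
  RingQuot.mkAlgHom F (EqRel F q) (FreeAlgebra.ι F EqGen.y)

noncomputable def uy' (F : Type*) [Field F] (q : F) : Usl2 F q :=
  RingQuot.mkAlgHom F (EqRel F q) (FreeAlgebra.ι F EqGen.y')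

noncomputable def uz (F : Type*) [Field F] (q : F) : Usl2 F q :=
  RingQuot.mkAlgHom F (EqRel F q) (FreeAlgebra.ι F EqGen.z)

/-- `X = a⁻²x + (1 − a⁻²)y⁻¹`. -/
noncomputable def uX (F : Type*) [Field F] (q a : F) : Usl2 F q :=
  (a ^ 2)⁻¹ • ux F q + (1 - (a ^ 2)⁻¹) • uy' F q

/-- `Z = a²z + (1 − a²)y⁻¹`. -/
noncomputable def uZ (F : Type*) [Field F] (q a : F) : Usl2 F q :=
  a ^ 2 • uz F q + (1 - a ^ 2) • uy' F q

/-- `A = a⁻¹x + az`. -/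
noncomputable def uA (F : Type*) [Field F] (q a : F) : Usl2 F q :=
  a⁻¹ • ux F q + a • uz F q

/-- `U_q^∨`, the subalgebra of `U_q(sl2)` generated by `x`, `y⁻¹`, `z`. -/
noncomputable def Uvee (F : Type*) [Field F] (q : F) : Subalgebra F (Usl2 F q) :=
  Algebra.adjoin F {ux F q, uy' F q, uz F q}


/-- `ν_x = q(1 − yz)`. -/
noncomputable def nux (F : Type*) [Field F] (q : F) : Usl2 F q :=
  q • (1 - uy F q * uz F q)

/-- `ν_y = q(1 − zx)`. -/
noncomputable def nuy (F : Type*) [Field F] (q : F) : Usl2 F q :=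
  q • (1 - uz F q * ux F q)

/-- `ν_z = q(1 − xy)`. -/
noncomputable def nuz (F : Type*) [Field F] (q : F) : Usl2 F q :=
  q • (1 - ux F q * uy F q)

/-- The power `y^s` for `s ∈ ℤ`, interpreted via `y` and `y⁻¹`. -/
noncomputable def uypow (F : Type*) [Field F] (q : F) (s : ℤ) : Usl2 F q :=
  if 0 ≤ s then uy F q ^ s.toNat else uy' F q ^ (-s).toNat

/-- `U_even`, the span of the basis monomials `x^r y^s z^t` (`r, t ∈ ℕ`, `s ∈ ℤ`)
with `r + s + t` even. -/
noncomputable def Ueven (F : Type*) [Field F] (q : F) : Submodule F (Usl2 F q) :=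
  Submodule.span F
    {m | ∃ (r t : ℕ) (s : ℤ), Even ((r : ℤ) + s + t) ∧
      m = ux F q ^ r * uypow F q s * uz F q ^ t}

/-- `U′_even`, the span of the basis monomials `x^r y^s z^t` (`r, s, t ∈ ℕ`)
with `r + s + t` even. -/
noncomputable def Uprimeeven (F : Type*) [Field F] (q : F) : Submodule F (Usl2 F q) :=
  Submodule.span F
    {m | ∃ r s t : ℕ, Even (r + s + t) ∧ m = ux F q ^ r * uy F q ^ s * uz F q ^ t}

section Lemmas

variable {F : Type*} [Field F] {q : F}

lemma rel_yy' : uy F q * uy' F q = 1 := by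
  have h := RingQuot.mkAlgHom_rel F (EqRel.yy' (F := F) (q := q))
  simpa [uy, uy', map_mul, map_one] using h

lemma rel_y'y : uy' F q * uy F q = 1 := by
  have h := RingQuot.mkAlgHom_rel F (EqRel.y'y (F := F) (q := q))
  simpa [uy, uy', map_mul, map_one] using h

lemma rel_xy : q • (ux F q * uy F q) - q⁻¹ • (uy F q * ux F q)
    = (q - q⁻¹) • (1 : Usl2 F q) := by
  have h := RingQuot.mkAlgHom_rel F (EqRel.xy (F := F) (q := q))
  simpa [ux, uy, map_mul, map_one, map_sub, map_smul] using h

lemma rel_yz : q • (uy F q * uz F q) - q⁻¹ • (uz F q * uy F q)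
    = (q - q⁻¹) • (1 : Usl2 F q) := by
  have h := RingQuot.mkAlgHom_rel F (EqRel.yz (F := F) (q := q))
  simpa [uy, uz, map_mul, map_one, map_sub, map_smul] using h

lemma rel_zx : q • (uz F q * ux F q) - q⁻¹ • (ux F q * uz F q)
    = (q - q⁻¹) • (1 : Usl2 F q) := by
  have h := RingQuot.mkAlgHom_rel F (EqRel.zx (F := F) (q := q))
  simpa [uz, ux, map_mul, map_one, map_sub, map_smul] using h

/-- generic swap: from the q-Weyl relation derive `b*a` in terms of `a*b`. -/
lemma swap_of_rel (hq0 : q ≠ 0) {a b : Usl2 F q}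
    (h : q • (a * b) - q⁻¹ • (b * a) = (q - q⁻¹) • 1) :
    b * a = (q ^ 2) • (a * b) - (q ^ 2 - 1) • 1 := by
  have h2 : q⁻¹ • (b * a) = q • (a * b) - (q - q⁻¹) • (1 : Usl2 F q) := by
    rw [← h]; exact (sub_sub_cancel _ _).symm
  have h3 := congrArg (fun u : Usl2 F q => q • u) h2
  simp only [smul_smul, smul_sub] at h3
  rw [mul_inv_cancel₀ hq0, one_smul] at h3
  rw [h3]
  match_scalars <;> field_simp <;> ring

lemma unswap (hq0 : q ≠ 0) {a b : Usl2 F q}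
    (h : b * a = (q ^ 2) • (a * b) - (q ^ 2 - 1) • 1) :
    a * b = (q ^ 2)⁻¹ • (b * a) + (1 - (q ^ 2)⁻¹) • 1 := by
  have hq2 : (q:F) ^ 2 ≠ 0 := pow_ne_zero _ hq0
  rw [h]
  match_scalars <;> field_simp <;> ring

/- straightening rules, normal order x < y < z -/
lemma Syx (hq0 : q ≠ 0) : uy F q * ux F q
    = (q ^ 2) • (ux F q * uy F q) - (q ^ 2 - 1) • 1 :=
  swap_of_rel hq0 rel_xy

lemma Szy (hq0 : q ≠ 0) : uz F q * uy F q
    = (q ^ 2) • (uy F q * uz F q) - (q ^ 2 - 1) • 1 :=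
  swap_of_rel hq0 rel_yz

lemma Sxz (hq0 : q ≠ 0) : ux F q * uz F q
    = (q ^ 2) • (uz F q * ux F q) - (q ^ 2 - 1) • 1 :=
  swap_of_rel hq0 rel_zx

lemma Szx (hq0 : q ≠ 0) : uz F q * ux F q
    = (q ^ 2)⁻¹ • (ux F q * uz F q) + (1 - (q ^ 2)⁻¹) • 1 :=
  unswap hq0 (Sxz hq0)

/- trailing-factor versions -/
lemma Syx' (hq0 : q ≠ 0) (u : Usl2 F q) : uy F q * (ux F q * u)
    = (q ^ 2) • (ux F q * (uy F q * u)) - (q ^ 2 - 1) • u := by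
  rw [← mul_assoc, Syx hq0]
  simp only [sub_mul, smul_mul_assoc, one_mul, mul_assoc]

lemma Szy' (hq0 : q ≠ 0) (u : Usl2 F q) : uz F q * (uy F q * u)
    = (q ^ 2) • (uy F q * (uz F q * u)) - (q ^ 2 - 1) • u := by
  rw [← mul_assoc, Szy hq0]
  simp only [sub_mul, smul_mul_assoc, one_mul, mul_assoc]

lemma Szx' (hq0 : q ≠ 0) (u : Usl2 F q) : uz F q * (ux F q * u)
    = (q ^ 2)⁻¹ • (ux F q * (uz F q * u)) + (1 - (q ^ 2)⁻¹) • u := by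
  rw [← mul_assoc, Szx hq0]
  simp only [add_mul, smul_mul_assoc, one_mul, mul_assoc]

end Lemmas
section Squares
variable {F : Type*} [Field F] {q : F}

set_option maxHeartbeats 2000000 in
lemma id_xx (hq0 : q ≠ 0) :
    (q ^ 2 - 1) • (ux F q * ux F q)
      = (q ^ 2 - 1) • (1 : Usl2 F q)
        + (nuz F q * nuy F q - (q ^ 2) • (nuy F q * nuz F q)) := by
  simp only [nuy, nuz, mul_sub, sub_mul, mul_add, add_mul, smul_mul_assoc,
    mul_smul_comm, mul_assoc, one_mul, mul_one, smul_smul, smul_sub, smul_add,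
    Syx hq0, Syx' hq0, Szy hq0, Szy' hq0, Szx hq0, Szx' hq0]
  match_scalars <;> field_simp <;> ring

set_option maxHeartbeats 2000000 in
lemma id_yy (hq0 : q ≠ 0) :
    (q ^ 2 - 1) • (uy F q * uy F q)
      = (q ^ 2 - 1) • (1 : Usl2 F q)
        + (nux F q * nuz F q - (q ^ 2) • (nuz F q * nux F q)) := by
  simp only [nux, nuz, mul_sub, sub_mul, mul_add, add_mul, smul_mul_assoc,
    mul_smul_comm, mul_assoc, one_mul, mul_one, smul_smul, smul_sub, smul_add,
    Syx hq0, Syx' hq0, Szy hq0, Szy' hq0, Szx hq0, Szx' hq0]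
  match_scalars <;> field_simp <;> ring

set_option maxHeartbeats 2000000 in
lemma id_zz (hq0 : q ≠ 0) :
    (q ^ 2 - 1) • (uz F q * uz F q)
      = (q ^ 2 - 1) • (1 : Usl2 F q)
        + (nuy F q * nux F q - (q ^ 2) • (nux F q * nuy F q)) := by
  simp only [nux, nuy, mul_sub, sub_mul, mul_add, add_mul, smul_mul_assoc,
    mul_smul_comm, mul_assoc, one_mul, mul_one, smul_smul, smul_sub, smul_add,
    Syx hq0, Syx' hq0, Szy hq0, Szy' hq0, Szx hq0, Szx' hq0]
  match_scalars <;> field_simp <;> ring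
end Squares
section Members
variable {F : Type*} [Field F] {q : F}

/-- abbreviation for the two adjoins -/
noncomputable def Aprime (F : Type*) [Field F] (q : F) : Subalgebra F (Usl2 F q) :=
  Algebra.adjoin F {nux F q, nuy F q, nuz F q}

noncomputable def Afull (F : Type*) [Field F] (q : F) : Subalgebra F (Usl2 F q) :=
  Algebra.adjoin F {nux F q, nuy F q, nuz F q, uy' F q ^ 2}

lemma Aprime_le_Afull : Aprime F q ≤ Afull F q :=
  Algebra.adjoin_mono (by intro u hu; simp only [Set.mem_insert_iff] at hu ⊢; tauto)

lemma nux_mem : nux F q ∈ Aprime F q := Algebra.subset_adjoin (by simp)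
lemma nuy_mem : nuy F q ∈ Aprime F q := Algebra.subset_adjoin (by simp)
lemma nuz_mem : nuz F q ∈ Aprime F q := Algebra.subset_adjoin (by simp)
lemma y'sq_mem : uy' F q ^ 2 ∈ Afull F q := Algebra.subset_adjoin (by simp)

lemma eq_xy (hq0 : q ≠ 0) : ux F q * uy F q = 1 - q⁻¹ • nuz F q := by
  rw [nuz, smul_smul, inv_mul_cancel₀ hq0, one_smul, sub_sub_cancel]

lemma eq_yz (hq0 : q ≠ 0) : uy F q * uz F q = 1 - q⁻¹ • nux F q := by
  rw [nux, smul_smul, inv_mul_cancel₀ hq0, one_smul, sub_sub_cancel]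

lemma eq_zx (hq0 : q ≠ 0) : uz F q * ux F q = 1 - q⁻¹ • nuy F q := by
  rw [nuy, smul_smul, inv_mul_cancel₀ hq0, one_smul, sub_sub_cancel]

lemma m_xy (hq0 : q ≠ 0) : ux F q * uy F q ∈ Aprime F q := by
  rw [eq_xy hq0]
  exact sub_mem (one_mem _) (Subalgebra.smul_mem _ nuz_mem _)

lemma m_yz (hq0 : q ≠ 0) : uy F q * uz F q ∈ Aprime F q := by
  rw [eq_yz hq0]
  exact sub_mem (one_mem _) (Subalgebra.smul_mem _ nux_mem _)

lemma m_zx (hq0 : q ≠ 0) : uz F q * ux F q ∈ Aprime F q := by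
  rw [eq_zx hq0]
  exact sub_mem (one_mem _) (Subalgebra.smul_mem _ nuy_mem _)

lemma m_xz (hq0 : q ≠ 0) : ux F q * uz F q ∈ Aprime F q := by
  rw [Sxz hq0]
  exact sub_mem (Subalgebra.smul_mem _ (m_zx hq0) _)
    (Subalgebra.smul_mem _ (one_mem _) _)

lemma smul_cancel_of_ne {c : F} (hc : c ≠ 0) {u v : Usl2 F q}
    (h : c • u = v) : u = c⁻¹ • v := by
  rw [← h, smul_smul, inv_mul_cancel₀ hc, one_smul]

lemma m_xx (hq0 : q ≠ 0) (hq2 : q ^ 2 ≠ 1) : ux F q * ux F q ∈ Aprime F q := by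
  have h2 : q ^ 2 - 1 ≠ 0 := sub_ne_zero.mpr hq2
  rw [smul_cancel_of_ne h2 (id_xx hq0)]
  exact Subalgebra.smul_mem _ (add_mem (Subalgebra.smul_mem _ (one_mem _) _)
    (sub_mem (mul_mem nuz_mem nuy_mem)
      (Subalgebra.smul_mem _ (mul_mem nuy_mem nuz_mem) _))) _

lemma m_yy (hq0 : q ≠ 0) (hq2 : q ^ 2 ≠ 1) : uy F q * uy F q ∈ Aprime F q := by
  have h2 : q ^ 2 - 1 ≠ 0 := sub_ne_zero.mpr hq2
  rw [smul_cancel_of_ne h2 (id_yy hq0)]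
  exact Subalgebra.smul_mem _ (add_mem (Subalgebra.smul_mem _ (one_mem _) _)
    (sub_mem (mul_mem nux_mem nuz_mem)
      (Subalgebra.smul_mem _ (mul_mem nuz_mem nux_mem) _))) _

lemma m_zz (hq0 : q ≠ 0) (hq2 : q ^ 2 ≠ 1) : uz F q * uz F q ∈ Aprime F q := by
  have h2 : q ^ 2 - 1 ≠ 0 := sub_ne_zero.mpr hq2
  rw [smul_cancel_of_ne h2 (id_zz hq0)]
  exact Subalgebra.smul_mem _ (add_mem (Subalgebra.smul_mem _ (one_mem _) _)
    (sub_mem (mul_mem nuy_mem nux_mem)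
      (Subalgebra.smul_mem _ (mul_mem nux_mem nuy_mem) _))) _

lemma m_y'y' : uy' F q * uy' F q ∈ Afull F q := by
  rw [← sq]; exact y'sq_mem

lemma m_xy' (hq0 : q ≠ 0) : ux F q * uy' F q ∈ Afull F q := by
  have h : ux F q * uy' F q = (ux F q * uy F q) * (uy' F q * uy' F q) := by
    rw [mul_assoc, ← mul_assoc (uy F q), rel_yy', one_mul]
  rw [h]
  exact mul_mem (Aprime_le_Afull (m_xy hq0)) m_y'y'

lemma m_y'z (hq0 : q ≠ 0) : uy' F q * uz F q ∈ Afull F q := by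
  have h : uy' F q * uz F q = (uy' F q * uy' F q) * (uy F q * uz F q) := by
    rw [mul_assoc, ← mul_assoc (uy' F q) (uy F q), rel_y'y, one_mul]
  rw [h]
  exact mul_mem m_y'y' (Aprime_le_Afull (m_yz hq0))

end Members
section Ypow
variable {F : Type*} [Field F] {q : F}

lemma uypow_natCast (n : ℕ) : uypow F q n = uy F q ^ n := by
  simp [uypow]

lemma uypow_zero : uypow F q 0 = 1 := by simp [uypow]

lemma uypow_one : uypow F q 1 = uy F q := by simp [uypow]

lemma uypow_neg (n : ℕ) : uypow F q (-(n:ℤ)) = uy' F q ^ n := by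
  cases n with
  | zero => simp [uypow]
  | succ m => rw [uypow, if_neg (by omega)]; norm_num

lemma uyp_succ (s : ℤ) : uypow F q (s + 1) = uypow F q s * uy F q := by
  rcases le_or_gt 0 s with h | h
  · rw [uypow, uypow, if_pos (by omega), if_pos h,
      show (s+1).toNat = s.toNat + 1 by omega, pow_succ]
  · rcases eq_or_lt_of_le (by omega : s ≤ -1) with h1 | h1
    · rw [h1]; norm_num [uypow, rel_y'y]
    · rw [uypow, uypow, if_neg (by omega), if_neg (by omega),
        show (-s).toNat = (-(s+1)).toNat + 1 by omega, pow_succ, mul_assoc,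
        rel_y'y, mul_one]

lemma uyp_pred (s : ℤ) : uypow F q (s - 1) = uypow F q s * uy' F q := by
  rcases le_or_gt s 0 with h | h
  · rcases eq_or_lt_of_le h with h1 | h1
    · rw [h1]; norm_num [uypow]
    · rw [uypow, uypow, if_neg (by omega), if_neg (by omega),
        show (-(s-1)).toNat = (-s).toNat + 1 by omega, pow_succ]
  · rw [uypow, uypow, if_pos (by omega), if_pos (by omega),
      show s.toNat = (s-1).toNat + 1 by omega, pow_succ, mul_assoc,
      rel_yy', mul_one]

lemma uyp_succ' (s : ℤ) : uypow F q (s + 1) = uy F q * uypow F q s := by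
  rcases le_or_gt 0 s with h | h
  · rw [uypow, uypow, if_pos (by omega), if_pos h,
      show (s+1).toNat = s.toNat + 1 by omega, pow_succ']
  · rcases eq_or_lt_of_le (by omega : s ≤ -1) with h1 | h1
    · rw [h1]; norm_num [uypow, rel_yy']
    · rw [uypow, uypow, if_neg (by omega), if_neg (by omega),
        show (-s).toNat = (-(s+1)).toNat + 1 by omega, pow_succ', ← mul_assoc,
        rel_yy', one_mul]

lemma uyp_pred' (s : ℤ) : uypow F q (s - 1) = uy' F q * uypow F q s := by
  rcases le_or_gt s 0 with h | h
  · rcases eq_or_lt_of_le h with h1 | h1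
    · rw [h1]; norm_num [uypow]
    · rw [uypow, uypow, if_neg (by omega), if_neg (by omega),
        show (-(s-1)).toNat = (-s).toNat + 1 by omega, pow_succ']
  · rw [uypow, uypow, if_pos (by omega), if_pos (by omega),
      show s.toNat = (s-1).toNat + 1 by omega, pow_succ', ← mul_assoc,
      rel_y'y, one_mul]

lemma uyp_add (s t : ℤ) : uypow F q (s + t) = uypow F q s * uypow F q t := by
  induction t using Int.induction_on with
  | zero => simp [uypow_zero]
  | succ k ih => rw [← add_assoc, uyp_succ, ih, uyp_succ, mul_assoc]
  | pred k ih =>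
      rw [show s + (-(k:ℤ) - 1) = (s + -(k:ℤ)) - 1 by ring, uyp_pred, ih,
        uyp_pred, mul_assoc]

end Ypow
section Straighten
variable {F : Type*} [Field F] {q : F}

lemma yy'_cancel (u : Usl2 F q) : uy F q * (uy' F q * u) = u := by
  rw [← mul_assoc, rel_yy', one_mul]

lemma y'y_cancel (u : Usl2 F q) : uy' F q * (uy F q * u) = u := by
  rw [← mul_assoc, rel_y'y, one_mul]

lemma solve_smul (hq0 : q ≠ 0) {u v w : Usl2 F q}
    (h : u = (q ^ 2) • v - (q ^ 2 - 1) • w) :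
    v = (q ^ 2)⁻¹ • u + (1 - (q ^ 2)⁻¹) • w := by
  have h2 : (q : F) ^ 2 ≠ 0 := pow_ne_zero _ hq0
  rw [h]; match_scalars <;> field_simp <;> ring

lemma Sxy' (hq0 : q ≠ 0) : ux F q * uy' F q
    = (q ^ 2) • (uy' F q * ux F q) - (q ^ 2 - 1) • (uy' F q * uy' F q) := by
  have h := congrArg (fun u => uy' F q * (u * uy' F q)) (Syx hq0)
  simp only [mul_assoc, y'y_cancel, sub_mul, smul_mul_assoc, one_mul, mul_sub,
    mul_smul_comm, rel_yy', mul_one, yy'_cancel] at h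
  exact h

lemma Sy'x (hq0 : q ≠ 0) : uy' F q * ux F q
    = (q ^ 2)⁻¹ • (ux F q * uy' F q) + (1 - (q ^ 2)⁻¹) • (uy' F q * uy' F q) :=
  solve_smul hq0 (Sxy' hq0)

lemma Sy'z (hq0 : q ≠ 0) : uy' F q * uz F q
    = (q ^ 2) • (uz F q * uy' F q) - (q ^ 2 - 1) • (uy' F q * uy' F q) := by
  have h := congrArg (fun u => uy' F q * (u * uy' F q)) (Szy hq0)
  simp only [mul_assoc, y'y_cancel, sub_mul, smul_mul_assoc, one_mul, mul_sub,
    mul_smul_comm, rel_yy', mul_one, yy'_cancel] at h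
  exact h

lemma Szy'' (hq0 : q ≠ 0) : uz F q * uy' F q
    = (q ^ 2)⁻¹ • (uy' F q * uz F q) + (1 - (q ^ 2)⁻¹) • (uy' F q * uy' F q) :=
  solve_smul hq0 (Sy'z hq0)

lemma zpow_two_eq (q : F) : q ^ (2 : ℤ) = q ^ 2 := by
  rw [show (2:ℤ) = ((2:ℕ):ℤ) by norm_num, zpow_natCast]

/-- `z^(t+1) y = q^(2(t+1)) y z^(t+1) - (q^(2(t+1)) - 1) z^t` -/
lemma Zty (hq0 : q ≠ 0) (t : ℕ) : uz F q ^ (t+1) * uy F q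
    = (q ^ (2*(t+1))) • (uy F q * uz F q ^ (t+1))
      - (q ^ (2*(t+1)) - 1) • uz F q ^ t := by
  induction t with
  | zero => simpa using Szy hq0
  | succ k ih =>
      rw [show uz F q ^ (k+1+1) * uy F q = uz F q * (uz F q ^ (k+1) * uy F q) by
        rw [← mul_assoc, ← pow_succ'], ih]
      rw [mul_sub, mul_smul_comm, mul_smul_comm, ← mul_assoc, Szy hq0,
        sub_mul, smul_mul_assoc, smul_mul_assoc, one_mul, mul_assoc,
        ← pow_succ', ← pow_succ']
      match_scalars <;> ring

/-- `z^(t+1) x = q^(-2(t+1)) x z^(t+1) + (1 - q^(-2(t+1))) z^t` -/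
lemma Ztx (hq0 : q ≠ 0) (t : ℕ) : uz F q ^ (t+1) * ux F q
    = ((q ^ (2*(t+1)))⁻¹) • (ux F q * uz F q ^ (t+1))
      + (1 - (q ^ (2*(t+1)))⁻¹) • uz F q ^ t := by
  induction t with
  | zero => simpa using Szx hq0
  | succ k ih =>
      have h2 : (q : F) ^ (2*(k+1)) ≠ 0 := pow_ne_zero _ hq0
      rw [show uz F q ^ (k+1+1) * ux F q = uz F q * (uz F q ^ (k+1) * ux F q) by
        rw [← mul_assoc, ← pow_succ'], ih]
      rw [mul_add, mul_smul_comm, mul_smul_comm, ← mul_assoc, Szx hq0,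
        add_mul, smul_mul_assoc, smul_mul_assoc, one_mul, mul_assoc,
        ← pow_succ', ← pow_succ']
      match_scalars <;> field_simp <;> ring

/-- `y^s x = q^(2s) x y^s - (q^(2s)-1) y^(s-1)` for all `s : ℤ`. -/
lemma Ysx (hq0 : q ≠ 0) (s : ℤ) : uypow F q s * ux F q
    = (q ^ (2*s)) • (ux F q * uypow F q s)
      - (q ^ (2*s) - 1) • uypow F q (s - 1) := by
  induction s using Int.induction_on with
  | zero => simp [uypow_zero]
  | succ k ih =>
      rw [uyp_succ' (k : ℤ), mul_assoc, ih, mul_sub, mul_smul_comm,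
        mul_smul_comm, ← mul_assoc (uy F q), Syx hq0, sub_mul, smul_mul_assoc,
        smul_mul_assoc, one_mul, mul_assoc, ← uyp_succ' (k:ℤ),
        ← uyp_succ' ((k:ℤ)-1),
        show ((k:ℤ) - 1 + 1 = (k:ℤ)) by ring,
        show ((k:ℤ) + 1 - 1 = (k:ℤ)) by ring]
      have e1 : q ^ (2*((k:ℤ)+1)) = q^2 * q ^ (2*(k:ℤ)) := by
        rw [show (2:ℤ)*((k:ℤ)+1) = 2 + 2*k by ring, zpow_add₀ hq0, zpow_two_eq]
      rw [e1]; match_scalars <;> ring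
  | pred k ih =>
      have e1 : q ^ (2*(-(k:ℤ) - 1)) = (q^2)⁻¹ * q ^ (2*(-(k:ℤ))) := by
        rw [show (2:ℤ)*(-(k:ℤ)-1) = (-2) + 2*(-(k:ℤ)) by ring, zpow_add₀ hq0,
          show ((-2 : ℤ) = -(2:ℤ)) by norm_num, zpow_neg, zpow_two_eq]
      have e2 : q ^ (2*(-(k:ℤ))) = (q ^ (2*k) : F)⁻¹ := by
        rw [show (2:ℤ)*(-(k:ℤ)) = -((2*k : ℕ) : ℤ) by push_cast; ring,
          zpow_neg, zpow_natCast]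
      have h2 : (q : F) ^ 2 ≠ 0 := pow_ne_zero _ hq0
      have h3 : (q : F) ^ (2*k) ≠ 0 := pow_ne_zero _ hq0
      conv_lhs => rw [uyp_pred' (-(k:ℤ)), mul_assoc, ih]
      rw [mul_sub, mul_smul_comm, mul_smul_comm,
        ← mul_assoc (uy' F q) (ux F q), Sy'x hq0, add_mul, smul_mul_assoc,
        smul_mul_assoc, mul_assoc (ux F q), mul_assoc (uy' F q),
        ← uyp_pred' (-(k:ℤ)), ← uyp_pred' (-(k:ℤ)-1), e1, e2]
      match_scalars <;> field_simp <;> ring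

/-- `z y^s = q^(2s) y^s z - (q^(2s)-1) y^(s-1)` for all `s : ℤ`. -/
lemma Szyp (hq0 : q ≠ 0) (s : ℤ) : uz F q * uypow F q s
    = (q ^ (2*s)) • (uypow F q s * uz F q)
      - (q ^ (2*s) - 1) • uypow F q (s - 1) := by
  induction s using Int.induction_on with
  | zero => simp [uypow_zero]
  | succ k ih =>
      rw [uyp_succ (k : ℤ), ← mul_assoc, ih, sub_mul, smul_mul_assoc,
        smul_mul_assoc, mul_assoc, Szy hq0, mul_sub, mul_smul_comm,
        mul_smul_comm, mul_one, ← mul_assoc, ← uyp_succ, ← uyp_succ,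
        show ((k:ℤ) - 1 + 1 = k) by ring,
        show ((k:ℤ) + 1 - 1 = k) by ring]
      have e1 : q ^ (2*((k:ℤ)+1)) = q^2 * q ^ (2*(k:ℤ)) := by
        rw [show (2:ℤ)*((k:ℤ)+1) = 2 + 2*k by ring, zpow_add₀ hq0, zpow_two_eq]
      rw [e1]; match_scalars <;> ring
  | pred k ih =>
      have e1 : q ^ (2*(-(k:ℤ) - 1)) = (q^2)⁻¹ * q ^ (2*(-(k:ℤ))) := by
        rw [show (2:ℤ)*(-(k:ℤ)-1) = (-2) + 2*(-(k:ℤ)) by ring, zpow_add₀ hq0,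
          show ((-2 : ℤ) = -(2:ℤ)) by norm_num, zpow_neg, zpow_two_eq]
      have e2 : q ^ (2*(-(k:ℤ))) = (q ^ (2*k) : F)⁻¹ := by
        rw [show (2:ℤ)*(-(k:ℤ)) = -((2*k : ℕ) : ℤ) by push_cast; ring,
          zpow_neg, zpow_natCast]
      have h2 : (q : F) ^ 2 ≠ 0 := pow_ne_zero _ hq0
      have h3 : (q : F) ^ (2*k) ≠ 0 := pow_ne_zero _ hq0
      conv_lhs => rw [uyp_pred (-(k:ℤ)), ← mul_assoc, ih]
      rw [sub_mul, smul_mul_assoc, smul_mul_assoc, mul_assoc, Szy'' hq0,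
        mul_add, mul_smul_comm, mul_smul_comm,
        ← mul_assoc (uypow F q (-(k:ℤ))) (uy' F q) (uz F q),
        ← mul_assoc (uypow F q (-(k:ℤ))) (uy' F q) (uy' F q),
        ← uyp_pred (-(k:ℤ)), ← uyp_pred (-(k:ℤ)-1), e1, e2]
      match_scalars <;> field_simp <;> ring

end Straighten
section SpanZ
variable {F : Type*} [Field F] {q : F}

/-- monomials of given parity, `s ∈ ℤ` -/
def MsetZ (F : Type*) [Field F] (q : F) (n : ℤ) : Set (Usl2 F q) :=
  {m | ∃ (r t : ℕ) (s : ℤ), ((r:ℤ) + s + t) % 2 = n % 2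
    ∧ m = ux F q ^ r * uypow F q s * uz F q ^ t}

noncomputable def VV (F : Type*) [Field F] (q : F) (n : ℤ) :
    Submodule F (Usl2 F q) := Submodule.span F (MsetZ F q n)

lemma VV_congr {m n : ℤ} (h : m % 2 = n % 2) : VV F q m = VV F q n := by
  unfold VV MsetZ; rw [h]

lemma mem_VV (n : ℤ) (r t : ℕ) (s : ℤ) (h : ((r:ℤ) + s + t) % 2 = n % 2) :
    ux F q ^ r * uypow F q s * uz F q ^ t ∈ VV F q n :=
  Submodule.subset_span ⟨r, t, s, h, rfl⟩

/-- multiplication of a monomial by `z` on the right -/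
lemma GZ (n : ℤ) (r t : ℕ) (s : ℤ) (h : ((r:ℤ) + s + t) % 2 = n % 2) :
    (ux F q ^ r * uypow F q s * uz F q ^ t) * uz F q ∈ VV F q (n+1) := by
  rw [mul_assoc, ← pow_succ]
  exact mem_VV _ r (t+1) s (by push_cast; omega)

/-- multiplication of a monomial by `y` on the right -/
lemma GY (hq0 : q ≠ 0) (n : ℤ) (r t : ℕ) (s : ℤ)
    (h : ((r:ℤ) + s + t) % 2 = n % 2) :
    (ux F q ^ r * uypow F q s * uz F q ^ t) * uy F q ∈ VV F q (n+1) := by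
  cases t with
  | zero =>
      rw [pow_zero, mul_one, mul_assoc, ← uyp_succ]
      have := mem_VV (F := F) (q := q) (n+1) r 0 (s+1) (by push_cast; omega)
      simpa using this
  | succ t' =>
      rw [mul_assoc, Zty hq0 t', mul_sub, mul_smul_comm, mul_smul_comm,
        ← mul_assoc, mul_assoc (ux F q ^ r) (uypow F q s) (uy F q),
        ← uyp_succ]
      exact sub_mem
        (Submodule.smul_mem _ _ (mem_VV _ r (t'+1) (s+1) (by push_cast; omega)))
        (Submodule.smul_mem _ _ (mem_VV _ r t' s (by push_cast; omega)))

/-- multiplication of a monomial by `x` on the right -/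
lemma GX (hq0 : q ≠ 0) (n : ℤ) (r t : ℕ) (s : ℤ)
    (h : ((r:ℤ) + s + t) % 2 = n % 2) :
    (ux F q ^ r * uypow F q s * uz F q ^ t) * ux F q ∈ VV F q (n+1) := by
  cases t with
  | zero =>
      rw [pow_zero, mul_one, mul_assoc, Ysx hq0 s, mul_sub, mul_smul_comm,
        mul_smul_comm, ← mul_assoc, ← pow_succ]
      refine sub_mem (Submodule.smul_mem _ _ ?_) (Submodule.smul_mem _ _ ?_)
      · have := mem_VV (F := F) (q := q) (n+1) (r+1) 0 s (by push_cast; omega)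
        simpa using this
      · have := mem_VV (F := F) (q := q) (n+1) r 0 (s-1) (by push_cast; omega)
        simpa using this
  | succ t' =>
      rw [mul_assoc, Ztx hq0 t', mul_add, mul_smul_comm, mul_smul_comm,
        ← mul_assoc, mul_assoc (ux F q ^ r) (uypow F q s) (ux F q),
        Ysx hq0 s, mul_sub, mul_smul_comm, mul_smul_comm, sub_mul,
        smul_mul_assoc, smul_mul_assoc, ← mul_assoc, ← pow_succ]
      refine add_mem (Submodule.smul_mem _ _ (sub_mem
        (Submodule.smul_mem _ _ ?_) (Submodule.smul_mem _ _ ?_)))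
        (Submodule.smul_mem _ _ ?_)
      · exact mem_VV _ (r+1) (t'+1) s (by push_cast; omega)
      · exact mem_VV _ r (t'+1) (s-1) (by push_cast; omega)
      · exact mem_VV _ r t' s (by push_cast; omega)

/-- x-free monomials, for the `y'` step -/
def WsetZ (F : Type*) [Field F] (q : F) (n : ℤ) : Set (Usl2 F q) :=
  {m | ∃ (t : ℕ) (s : ℤ), (s + t) % 2 = n % 2 ∧ m = uypow F q s * uz F q ^ t}

noncomputable def WW (F : Type*) [Field F] (q : F) (n : ℤ) :
    Submodule F (Usl2 F q) := Submodule.span F (WsetZ F q n)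

lemma WW_congr {m n : ℤ} (h : m % 2 = n % 2) : WW F q m = WW F q n := by
  unfold WW WsetZ; rw [h]

lemma mem_WW (n : ℤ) (t : ℕ) (s : ℤ) (h : (s + t) % 2 = n % 2) :
    uypow F q s * uz F q ^ t ∈ WW F q n :=
  Submodule.subset_span ⟨t, s, h, rfl⟩

lemma zWW (hq0 : q ≠ 0) (n : ℤ) {u : Usl2 F q} (hu : u ∈ WW F q n) :
    uz F q * u ∈ WW F q (n+1) := by
  induction hu using Submodule.span_induction with
  | mem m hm =>
      obtain ⟨t, s, hp, rfl⟩ := hm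
      rw [← mul_assoc, Szyp hq0 s, sub_mul, smul_mul_assoc, smul_mul_assoc,
        mul_assoc, ← pow_succ']
      exact sub_mem
        (Submodule.smul_mem _ _ (mem_WW _ (t+1) s (by push_cast; omega)))
        (Submodule.smul_mem _ _ (mem_WW _ t (s-1) (by push_cast; omega)))
  | zero => rw [mul_zero]; exact zero_mem _
  | add a b _ _ ha hb => rw [mul_add]; exact add_mem ha hb
  | smul c a _ ha => rw [mul_smul_comm]; exact Submodule.smul_mem _ _ ha

lemma zty'WW (hq0 : q ≠ 0) (t : ℕ) :
    uz F q ^ t * uy' F q ∈ WW F q ((t:ℤ) + 1) := by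
  induction t with
  | zero =>
      rw [pow_zero, one_mul]
      have huy : uypow F q (-1) = uy' F q := by rw [uypow]; norm_num
      have := mem_WW (F := F) (q := q) 1 0 (-1) (by decide)
      simpa [huy] using this
  | succ t' ih =>
      rw [pow_succ', mul_assoc]
      have := zWW hq0 _ ih
      rwa [show ((t':ℤ) + 1 + 1 = ((t'+1 : ℕ) : ℤ) + 1) by push_cast; ring]
        at this

/-- multiplication of a monomial by `y'` on the right -/
lemma GY' (hq0 : q ≠ 0) (n : ℤ) (r t : ℕ) (s : ℤ)
    (h : ((r:ℤ) + s + t) % 2 = n % 2) :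
    (ux F q ^ r * uypow F q s * uz F q ^ t) * uy' F q ∈ VV F q (n+1) := by
  rw [mul_assoc]
  have key : ∀ w ∈ WW F q ((t:ℤ)+1),
      (ux F q ^ r * uypow F q s) * w ∈ VV F q (n+1) := by
    intro w hw
    induction hw using Submodule.span_induction with
    | mem m hm =>
        obtain ⟨t', s', hp, rfl⟩ := hm
        rw [mul_assoc, ← mul_assoc (uypow F q s) (uypow F q s'), ← uyp_add,
          ← mul_assoc]
        exact mem_VV _ r t' (s + s') (by push_cast at hp h ⊢; omega)
    | zero => rw [mul_zero]; exact zero_mem _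
    | add a b _ _ ha hb => rw [mul_add]; exact add_mem ha hb
    | smul c a _ ha => rw [mul_smul_comm]; exact Submodule.smul_mem _ _ ha
  exact key _ (zty'WW hq0 t)

end SpanZ
section ClosureZ
variable {F : Type*} [Field F] {q : F}

lemma VV_mul_x (hq0 : q ≠ 0) {n : ℤ} {u : Usl2 F q} (hu : u ∈ VV F q n) :
    u * ux F q ∈ VV F q (n+1) := by
  induction hu using Submodule.span_induction with
  | mem m hm => obtain ⟨r, t, s, hp, rfl⟩ := hm; exact GX hq0 n r t s hp
  | zero => rw [zero_mul]; exact zero_mem _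
  | add a b _ _ ha hb => rw [add_mul]; exact add_mem ha hb
  | smul c a _ ha => rw [smul_mul_assoc]; exact Submodule.smul_mem _ _ ha

lemma VV_mul_y (hq0 : q ≠ 0) {n : ℤ} {u : Usl2 F q} (hu : u ∈ VV F q n) :
    u * uy F q ∈ VV F q (n+1) := by
  induction hu using Submodule.span_induction with
  | mem m hm => obtain ⟨r, t, s, hp, rfl⟩ := hm; exact GY hq0 n r t s hp
  | zero => rw [zero_mul]; exact zero_mem _
  | add a b _ _ ha hb => rw [add_mul]; exact add_mem ha hb
  | smul c a _ ha => rw [smul_mul_assoc]; exact Submodule.smul_mem _ _ ha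

lemma VV_mul_y' (hq0 : q ≠ 0) {n : ℤ} {u : Usl2 F q} (hu : u ∈ VV F q n) :
    u * uy' F q ∈ VV F q (n+1) := by
  induction hu using Submodule.span_induction with
  | mem m hm => obtain ⟨r, t, s, hp, rfl⟩ := hm; exact GY' hq0 n r t s hp
  | zero => rw [zero_mul]; exact zero_mem _
  | add a b _ _ ha hb => rw [add_mul]; exact add_mem ha hb
  | smul c a _ ha => rw [smul_mul_assoc]; exact Submodule.smul_mem _ _ ha

lemma VV_mul_z (hq0 : q ≠ 0) {n : ℤ} {u : Usl2 F q} (hu : u ∈ VV F q n) :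
    u * uz F q ∈ VV F q (n+1) := by
  induction hu using Submodule.span_induction with
  | mem m hm => obtain ⟨r, t, s, hp, rfl⟩ := hm; exact GZ n r t s hp
  | zero => rw [zero_mul]; exact zero_mem _
  | add a b _ _ ha hb => rw [add_mul]; exact add_mem ha hb
  | smul c a _ ha => rw [smul_mul_assoc]; exact Submodule.smul_mem _ _ ha

lemma VV_mul_xpow (hq0 : q ≠ 0) {n : ℤ} {u : Usl2 F q} (r : ℕ)
    (hu : u ∈ VV F q n) : u * ux F q ^ r ∈ VV F q (n + r) := by
  induction r with
  | zero => simpa using hu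
  | succ k ih =>
      rw [pow_succ, ← mul_assoc]
      have := VV_mul_x hq0 ih
      rwa [show (n + (k:ℤ)) + 1 = n + ((k+1 : ℕ) : ℤ) by push_cast; ring] at this

lemma VV_mul_zpow (hq0 : q ≠ 0) {n : ℤ} {u : Usl2 F q} (t : ℕ)
    (hu : u ∈ VV F q n) : u * uz F q ^ t ∈ VV F q (n + t) := by
  induction t with
  | zero => simpa using hu
  | succ k ih =>
      rw [pow_succ, ← mul_assoc]
      have := VV_mul_z hq0 ih
      rwa [show (n + (k:ℤ)) + 1 = n + ((k+1 : ℕ) : ℤ) by push_cast; ring] at this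

lemma VV_mul_ypow (hq0 : q ≠ 0) {n : ℤ} {u : Usl2 F q} (s : ℤ)
    (hu : u ∈ VV F q n) : u * uypow F q s ∈ VV F q (n + s) := by
  induction s using Int.induction_on with
  | zero => simpa [uypow_zero] using hu
  | succ k ih =>
      rw [uyp_succ, ← mul_assoc]
      have := VV_mul_y hq0 ih
      rwa [show (n + (k:ℤ)) + 1 = n + ((k:ℤ)+1) by ring] at this
  | pred k ih =>
      rw [uyp_pred, ← mul_assoc]
      have := VV_mul_y' hq0 ih
      have hc : VV F q (n + -(k:ℤ) + 1) = VV F q (n + (-(k:ℤ)-1)) :=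
        VV_congr (by omega)
      rw [← hc]; exact this

lemma VV_mul (hq0 : q ≠ 0) {a b : ℤ} {u v : Usl2 F q}
    (hu : u ∈ VV F q a) (hv : v ∈ VV F q b) : u * v ∈ VV F q (a + b) := by
  induction hv using Submodule.span_induction with
  | mem m hm =>
      obtain ⟨r, t, s, hp, rfl⟩ := hm
      rw [← mul_assoc, ← mul_assoc]
      have := VV_mul_zpow hq0 t (VV_mul_ypow hq0 s (VV_mul_xpow hq0 r hu))
      have hc : VV F q (a + r + s + t) = VV F q (a + b) := VV_congr (by omega)
      rw [← hc]; exact this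
  | zero => rw [mul_zero]; exact zero_mem _
  | add x y _ _ hx hy => rw [mul_add]; exact add_mem hx hy
  | smul c x _ hx => rw [mul_smul_comm]; exact Submodule.smul_mem _ _ hx

lemma one_mem_VV : (1 : Usl2 F q) ∈ VV F q 0 := by
  have := mem_VV (F := F) (q := q) 0 0 0 0 (by decide)
  simpa [uypow_zero] using this

lemma xy_mem_VV : ux F q * uy F q ∈ VV F q 0 := by
  have := mem_VV (F := F) (q := q) 0 1 0 1 (by decide)
  simpa [uypow_one] using this

lemma yz_mem_VV : uy F q * uz F q ∈ VV F q 0 := by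
  have := mem_VV (F := F) (q := q) 0 0 1 1 (by decide)
  simpa [uypow_one] using this

lemma xz_mem_VV : ux F q * uz F q ∈ VV F q 0 := by
  have := mem_VV (F := F) (q := q) 0 1 1 0 (by decide)
  simpa [uypow_zero] using this

lemma y'sq_mem_VV : uy' F q ^ 2 ∈ VV F q 0 := by
  have huy : uypow F q (-2) = uy' F q ^ 2 := by
    rw [uypow, if_neg (by decide), show ((-(-2:ℤ)).toNat = 2) by decide]
  have := mem_VV (F := F) (q := q) 0 0 0 (-2) (by decide)
  simpa [huy] using this

lemma nux_mem_VV : nux F q ∈ VV F q 0 := by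
  rw [nux]
  exact Submodule.smul_mem _ _ (sub_mem one_mem_VV yz_mem_VV)

lemma nuz_mem_VV : nuz F q ∈ VV F q 0 := by
  rw [nuz]
  exact Submodule.smul_mem _ _ (sub_mem one_mem_VV xy_mem_VV)

lemma nuy_mem_VV (hq0 : q ≠ 0) : nuy F q ∈ VV F q 0 := by
  rw [nuy, Szx hq0]
  exact Submodule.smul_mem _ _ (sub_mem one_mem_VV
    (add_mem (Submodule.smul_mem _ _ xz_mem_VV)
      (Submodule.smul_mem _ _ one_mem_VV)))

lemma Afull_le_VV (hq0 : q ≠ 0) {u : Usl2 F q} (hu : u ∈ Afull F q) :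
    u ∈ VV F q 0 := by
  induction hu using Algebra.adjoin_induction with
  | mem v hv =>
      simp only [Set.mem_insert_iff, Set.mem_singleton_iff] at hv
      rcases hv with rfl | rfl | rfl | rfl
      · exact nux_mem_VV
      · exact nuy_mem_VV hq0
      · exact nuz_mem_VV
      · exact y'sq_mem_VV
  | algebraMap r =>
      rw [Algebra.algebraMap_eq_smul_one]
      exact Submodule.smul_mem _ _ one_mem_VV
  | add a b _ _ ha hb => exact add_mem ha hb
  | mul a b _ _ ha hb => simpa using VV_mul hq0 ha hb

lemma Ueven_eq_VV0 : Ueven F q = VV F q 0 := by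
  unfold Ueven VV MsetZ
  congr 1
  ext u
  refine exists_congr fun r => exists_congr fun t => exists_congr fun s =>
    and_congr_left fun _ => ?_
  rw [Int.even_iff]
  norm_num

end ClosureZ
section SpanN
variable {F : Type*} [Field F] {q : F}

def MsetN (F : Type*) [Field F] (q : F) (n : ℕ) : Set (Usl2 F q) :=
  {m | ∃ r s t : ℕ, (r + s + t) % 2 = n % 2
    ∧ m = ux F q ^ r * uy F q ^ s * uz F q ^ t}

noncomputable def VN (F : Type*) [Field F] (q : F) (n : ℕ) :
    Submodule F (Usl2 F q) := Submodule.span F (MsetN F q n)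

lemma VN_congr {m n : ℕ} (h : m % 2 = n % 2) : VN F q m = VN F q n := by
  unfold VN MsetN; rw [h]

lemma mem_VN (n r s t : ℕ) (h : (r + s + t) % 2 = n % 2) :
    ux F q ^ r * uy F q ^ s * uz F q ^ t ∈ VN F q n :=
  Submodule.subset_span ⟨r, s, t, h, rfl⟩

/-- `y^(s+1) x` swap with ℕ exponents -/
lemma YsxN (hq0 : q ≠ 0) (s : ℕ) : uy F q ^ (s+1) * ux F q
    = (q ^ (2*(s+1))) • (ux F q * uy F q ^ (s+1))
      - (q ^ (2*(s+1)) - 1) • uy F q ^ s := by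
  have h1 := Ysx (F := F) hq0 ((s+1 : ℕ) : ℤ)
  rw [uypow_natCast, show ((s+1:ℕ):ℤ) - 1 = ((s:ℕ):ℤ) by push_cast; ring,
    uypow_natCast,
    show q ^ (2*((s+1:ℕ):ℤ)) = q ^ (2*(s+1)) by
      rw [show (2*((s+1:ℕ):ℤ)) = ((2*(s+1):ℕ):ℤ) by push_cast; ring,
        zpow_natCast]] at h1
  exact h1

lemma GZN (n r s t : ℕ) (h : (r + s + t) % 2 = n % 2) :
    (ux F q ^ r * uy F q ^ s * uz F q ^ t) * uz F q ∈ VN F q (n+1) := by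
  rw [mul_assoc, ← pow_succ]
  exact mem_VN _ r s (t+1) (by omega)

lemma GYN (hq0 : q ≠ 0) (n r s t : ℕ) (h : (r + s + t) % 2 = n % 2) :
    (ux F q ^ r * uy F q ^ s * uz F q ^ t) * uy F q ∈ VN F q (n+1) := by
  cases t with
  | zero =>
      rw [pow_zero, mul_one, mul_assoc, ← pow_succ]
      have := mem_VN (F := F) (q := q) (n+1) r (s+1) 0 (by omega)
      simpa using this
  | succ t' =>
      rw [mul_assoc, Zty hq0 t', mul_sub, mul_smul_comm, mul_smul_comm,
        ← mul_assoc, mul_assoc (ux F q ^ r) (uy F q ^ s) (uy F q), ← pow_succ]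
      exact sub_mem
        (Submodule.smul_mem _ _ (mem_VN _ r (s+1) (t'+1) (by omega)))
        (Submodule.smul_mem _ _ (mem_VN _ r s t' (by omega)))

lemma GXN (hq0 : q ≠ 0) (n r s t : ℕ) (h : (r + s + t) % 2 = n % 2) :
    (ux F q ^ r * uy F q ^ s * uz F q ^ t) * ux F q ∈ VN F q (n+1) := by
  cases s with
  | zero =>
      rw [pow_zero, mul_one]
      cases t with
      | zero =>
          rw [pow_zero, mul_one, ← pow_succ]
          have := mem_VN (F := F) (q := q) (n+1) (r+1) 0 0 (by omega)
          simpa using this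
      | succ t' =>
          rw [mul_assoc, Ztx hq0 t', mul_add, mul_smul_comm, mul_smul_comm,
            ← mul_assoc, ← pow_succ]
          refine add_mem (Submodule.smul_mem _ _ ?_) (Submodule.smul_mem _ _ ?_)
          · have := mem_VN (F := F) (q := q) (n+1) (r+1) 0 (t'+1) (by omega)
            simpa using this
          · have := mem_VN (F := F) (q := q) (n+1) r 0 t' (by omega)
            simpa using this
  | succ s' =>
      cases t with
      | zero =>
          rw [pow_zero, mul_one, mul_assoc, YsxN hq0 s', mul_sub,
            mul_smul_comm, mul_smul_comm, ← mul_assoc, ← pow_succ]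
          refine sub_mem (Submodule.smul_mem _ _ ?_) (Submodule.smul_mem _ _ ?_)
          · have := mem_VN (F := F) (q := q) (n+1) (r+1) (s'+1) 0 (by omega)
            simpa using this
          · have := mem_VN (F := F) (q := q) (n+1) r s' 0 (by omega)
            simpa using this
      | succ t' =>
          rw [mul_assoc, Ztx hq0 t', mul_add, mul_smul_comm, mul_smul_comm,
            ← mul_assoc, mul_assoc (ux F q ^ r) (uy F q ^ (s'+1)) (ux F q),
            YsxN hq0 s', mul_sub, mul_smul_comm, mul_smul_comm, sub_mul,
            smul_mul_assoc, smul_mul_assoc, ← mul_assoc, ← pow_succ]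
          refine add_mem (Submodule.smul_mem _ _ (sub_mem
            (Submodule.smul_mem _ _ ?_) (Submodule.smul_mem _ _ ?_)))
            (Submodule.smul_mem _ _ ?_)
          · exact mem_VN _ (r+1) (s'+1) (t'+1) (by omega)
          · exact mem_VN _ r s' (t'+1) (by omega)
          · exact mem_VN _ r (s'+1) t' (by omega)

lemma VN_mul_x (hq0 : q ≠ 0) {n : ℕ} {u : Usl2 F q} (hu : u ∈ VN F q n) :
    u * ux F q ∈ VN F q (n+1) := by
  induction hu using Submodule.span_induction with
  | mem m hm => obtain ⟨r, s, t, hp, rfl⟩ := hm; exact GXN hq0 n r s t hp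
  | zero => rw [zero_mul]; exact zero_mem _
  | add a b _ _ ha hb => rw [add_mul]; exact add_mem ha hb
  | smul c a _ ha => rw [smul_mul_assoc]; exact Submodule.smul_mem _ _ ha

lemma VN_mul_y (hq0 : q ≠ 0) {n : ℕ} {u : Usl2 F q} (hu : u ∈ VN F q n) :
    u * uy F q ∈ VN F q (n+1) := by
  induction hu using Submodule.span_induction with
  | mem m hm => obtain ⟨r, s, t, hp, rfl⟩ := hm; exact GYN hq0 n r s t hp
  | zero => rw [zero_mul]; exact zero_mem _
  | add a b _ _ ha hb => rw [add_mul]; exact add_mem ha hb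
  | smul c a _ ha => rw [smul_mul_assoc]; exact Submodule.smul_mem _ _ ha

lemma VN_mul_z {n : ℕ} {u : Usl2 F q} (hu : u ∈ VN F q n) :
    u * uz F q ∈ VN F q (n+1) := by
  induction hu using Submodule.span_induction with
  | mem m hm => obtain ⟨r, s, t, hp, rfl⟩ := hm; exact GZN n r s t hp
  | zero => rw [zero_mul]; exact zero_mem _
  | add a b _ _ ha hb => rw [add_mul]; exact add_mem ha hb
  | smul c a _ ha => rw [smul_mul_assoc]; exact Submodule.smul_mem _ _ ha

lemma VN_mul_xpow (hq0 : q ≠ 0) {n : ℕ} {u : Usl2 F q} (r : ℕ)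
    (hu : u ∈ VN F q n) : u * ux F q ^ r ∈ VN F q (n + r) := by
  induction r with
  | zero => simpa using hu
  | succ k ih => rw [pow_succ, ← mul_assoc, show n + (k+1) = (n+k) + 1 by omega]
                 exact VN_mul_x hq0 ih

lemma VN_mul_ypow (hq0 : q ≠ 0) {n : ℕ} {u : Usl2 F q} (s : ℕ)
    (hu : u ∈ VN F q n) : u * uy F q ^ s ∈ VN F q (n + s) := by
  induction s with
  | zero => simpa using hu
  | succ k ih => rw [pow_succ, ← mul_assoc, show n + (k+1) = (n+k) + 1 by omega]
                 exact VN_mul_y hq0 ih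

lemma VN_mul_zpow {n : ℕ} {u : Usl2 F q} (t : ℕ)
    (hu : u ∈ VN F q n) : u * uz F q ^ t ∈ VN F q (n + t) := by
  induction t with
  | zero => simpa using hu
  | succ k ih => rw [pow_succ, ← mul_assoc, show n + (k+1) = (n+k) + 1 by omega]
                 exact VN_mul_z ih

lemma VN_mul (hq0 : q ≠ 0) {a b : ℕ} {u v : Usl2 F q}
    (hu : u ∈ VN F q a) (hv : v ∈ VN F q b) : u * v ∈ VN F q (a + b) := by
  induction hv using Submodule.span_induction with
  | mem m hm =>
      obtain ⟨r, s, t, hp, rfl⟩ := hm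
      rw [← mul_assoc, ← mul_assoc]
      have := VN_mul_zpow t (VN_mul_ypow hq0 s (VN_mul_xpow hq0 r hu))
      have hc : VN F q (a + r + s + t) = VN F q (a + b) := VN_congr (by omega)
      rw [← hc]; exact this
  | zero => rw [mul_zero]; exact zero_mem _
  | add x y _ _ hx hy => rw [mul_add]; exact add_mem hx hy
  | smul c x _ hx => rw [mul_smul_comm]; exact Submodule.smul_mem _ _ hx

lemma one_mem_VN : (1 : Usl2 F q) ∈ VN F q 0 := by
  have := mem_VN (F := F) (q := q) 0 0 0 0 (by omega)
  simpa using this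

lemma xy_mem_VN : ux F q * uy F q ∈ VN F q 0 := by
  have := mem_VN (F := F) (q := q) 0 1 1 0 (by omega)
  simpa using this

lemma yz_mem_VN : uy F q * uz F q ∈ VN F q 0 := by
  have := mem_VN (F := F) (q := q) 0 0 1 1 (by omega)
  simpa using this

lemma xz_mem_VN : ux F q * uz F q ∈ VN F q 0 := by
  have := mem_VN (F := F) (q := q) 0 1 0 1 (by omega)
  simpa using this

lemma nux_mem_VN : nux F q ∈ VN F q 0 := by
  rw [nux]; exact Submodule.smul_mem _ _ (sub_mem one_mem_VN yz_mem_VN)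

lemma nuz_mem_VN : nuz F q ∈ VN F q 0 := by
  rw [nuz]; exact Submodule.smul_mem _ _ (sub_mem one_mem_VN xy_mem_VN)

lemma nuy_mem_VN (hq0 : q ≠ 0) : nuy F q ∈ VN F q 0 := by
  rw [nuy, Szx hq0]
  exact Submodule.smul_mem _ _ (sub_mem one_mem_VN
    (add_mem (Submodule.smul_mem _ _ xz_mem_VN)
      (Submodule.smul_mem _ _ one_mem_VN)))

lemma Aprime_le_VN (hq0 : q ≠ 0) {u : Usl2 F q} (hu : u ∈ Aprime F q) :
    u ∈ VN F q 0 := by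
  induction hu using Algebra.adjoin_induction with
  | mem v hv =>
      simp only [Set.mem_insert_iff, Set.mem_singleton_iff] at hv
      rcases hv with rfl | rfl | rfl
      · exact nux_mem_VN
      · exact nuy_mem_VN hq0
      · exact nuz_mem_VN
  | algebraMap r =>
      rw [Algebra.algebraMap_eq_smul_one]
      exact Submodule.smul_mem _ _ one_mem_VN
  | add a b _ _ ha hb => exact add_mem ha hb
  | mul a b _ _ ha hb => simpa using VN_mul hq0 ha hb

lemma Uprimeeven_eq_VN0 : Uprimeeven F q = VN F q 0 := by
  unfold Uprimeeven VN MsetN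
  congr 1
  ext u
  refine exists_congr fun r => exists_congr fun s => exists_congr fun t =>
    and_congr_left fun _ => ?_
  rw [Nat.even_iff]

end SpanN
section Reverse
variable {F : Type*} [Field F] {q : F}

lemma uypow_negone : uypow F q (-1) = uy' F q := by rw [uypow]; norm_num

/- split lemmas : peeling a leading pair off a monomial -/
lemma e2xN (r s t : ℕ) : ux F q ^ (r+1+1) * uy F q ^ s * uz F q ^ t
    = (ux F q * ux F q) * (ux F q ^ r * uy F q ^ s * uz F q ^ t) := by
  simp [pow_succ', mul_assoc]

lemma exyN (s t : ℕ) : ux F q ^ 1 * uy F q ^ (s+1) * uz F q ^ t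
    = (ux F q * uy F q) * (ux F q ^ 0 * uy F q ^ s * uz F q ^ t) := by
  simp [pow_succ', mul_assoc]

lemma exzN (t : ℕ) : ux F q ^ 1 * uy F q ^ 0 * uz F q ^ (t+1)
    = (ux F q * uz F q) * (ux F q ^ 0 * uy F q ^ 0 * uz F q ^ t) := by
  simp [pow_succ', mul_assoc]

lemma e2yN (s t : ℕ) : ux F q ^ 0 * uy F q ^ (s+1+1) * uz F q ^ t
    = (uy F q * uy F q) * (ux F q ^ 0 * uy F q ^ s * uz F q ^ t) := by
  simp [pow_succ', mul_assoc]

lemma eyzN (t : ℕ) : ux F q ^ 0 * uy F q ^ 1 * uz F q ^ (t+1)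
    = (uy F q * uz F q) * (ux F q ^ 0 * uy F q ^ 0 * uz F q ^ t) := by
  simp [pow_succ', mul_assoc]

lemma e2zN (t : ℕ) : ux F q ^ 0 * uy F q ^ 0 * uz F q ^ (t+1+1)
    = (uz F q * uz F q) * (ux F q ^ 0 * uy F q ^ 0 * uz F q ^ t) := by
  simp [pow_succ', mul_assoc]

lemma revN (hq0 : q ≠ 0) (hq2 : q ^ 2 ≠ 1) :
    ∀ n r s t : ℕ, r + s + t = n → (r + s + t) % 2 = 0 →
      ux F q ^ r * uy F q ^ s * uz F q ^ t ∈ Aprime F q := by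
  intro n
  induction n using Nat.strong_induction_on with
  | _ n ih =>
    intro r s t hn hp
    rcases r with _ | _ | r
    · rcases s with _ | _ | s
      · rcases t with _ | _ | t
        · simpa using one_mem (Aprime F q)
        · omega
        · rw [e2zN]
          exact mul_mem (m_zz hq0 hq2) (ih (0+0+t) (by omega) 0 0 t rfl (by omega))
      · rcases t with _ | t
        · omega
        · rw [eyzN]
          exact mul_mem (m_yz hq0) (ih (0+0+t) (by omega) 0 0 t rfl (by omega))
      · rw [e2yN]
        exact mul_mem (m_yy hq0 hq2) (ih (0+s+t) (by omega) 0 s t rfl (by omega))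
    · rcases s with _ | s
      · rcases t with _ | t
        · omega
        · rw [exzN]
          exact mul_mem (m_xz hq0) (ih (0+0+t) (by omega) 0 0 t rfl (by omega))
      · rw [exyN]
        exact mul_mem (m_xy hq0) (ih (0+s+t) (by omega) 0 s t rfl (by omega))
    · rw [e2xN]
      exact mul_mem (m_xx hq0 hq2) (ih (r+s+t) (by omega) r s t rfl (by omega))

/- the ℤ-power versions -/
lemma e2xZ (r t : ℕ) (s : ℤ) : ux F q ^ (r+1+1) * uypow F q s * uz F q ^ t
    = (ux F q * ux F q) * (ux F q ^ r * uypow F q s * uz F q ^ t) := by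
  simp [pow_succ', mul_assoc]

lemma exyZ (t : ℕ) (s : ℤ) (hs : 0 < s) :
    ux F q ^ 1 * uypow F q s * uz F q ^ t
    = (ux F q * uy F q) * (ux F q ^ 0 * uypow F q (s-1) * uz F q ^ t) := by
  have huy : uypow F q s = uy F q * uypow F q (s-1) := by
    conv_lhs => rw [show s = (s-1)+1 by ring, uyp_succ']
  rw [huy]; simp [mul_assoc]

lemma exy'Z (t : ℕ) (s : ℤ) (hs : s < 0) :
    ux F q ^ 1 * uypow F q s * uz F q ^ t
    = (ux F q * uy' F q) * (ux F q ^ 0 * uypow F q (s+1) * uz F q ^ t) := by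
  have huy : uypow F q s = uy' F q * uypow F q (s+1) := by
    conv_lhs => rw [show s = (s+1)-1 by ring, uyp_pred']
  rw [huy]; simp [mul_assoc]

lemma exzZ (t : ℕ) : ux F q ^ 1 * uypow F q 0 * uz F q ^ (t+1)
    = (ux F q * uz F q) * (ux F q ^ 0 * uypow F q 0 * uz F q ^ t) := by
  simp [uypow_zero, pow_succ', mul_assoc]

lemma e2yZ (t : ℕ) (s : ℤ) (hs : 2 ≤ s) :
    ux F q ^ 0 * uypow F q s * uz F q ^ t
    = (uy F q * uy F q) * (ux F q ^ 0 * uypow F q (s-2) * uz F q ^ t) := by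
  have huy : uypow F q s = uy F q * (uy F q * uypow F q (s-2)) := by
    conv_lhs => rw [show s = (s-2)+1+1 by ring, uyp_succ', uyp_succ']
  rw [huy]; simp [mul_assoc]

lemma e2y'Z (t : ℕ) (s : ℤ) (hs : s ≤ -2) :
    ux F q ^ 0 * uypow F q s * uz F q ^ t
    = (uy' F q * uy' F q) * (ux F q ^ 0 * uypow F q (s+2) * uz F q ^ t) := by
  have huy : uypow F q s = uy' F q * (uy' F q * uypow F q (s+2)) := by
    conv_lhs => rw [show s = (s+2)-1-1 by ring, uyp_pred', uyp_pred']
  rw [huy]; simp [mul_assoc]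

lemma eyzZ (t : ℕ) : ux F q ^ 0 * uypow F q 1 * uz F q ^ (t+1)
    = (uy F q * uz F q) * (ux F q ^ 0 * uypow F q 0 * uz F q ^ t) := by
  simp [uypow_one, uypow_zero, pow_succ', mul_assoc]

lemma ey'zZ (t : ℕ) : ux F q ^ 0 * uypow F q (-1) * uz F q ^ (t+1)
    = (uy' F q * uz F q) * (ux F q ^ 0 * uypow F q 0 * uz F q ^ t) := by
  simp [uypow_negone, uypow_zero, pow_succ', mul_assoc]

lemma e2zZ (t : ℕ) : ux F q ^ 0 * uypow F q 0 * uz F q ^ (t+1+1)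
    = (uz F q * uz F q) * (ux F q ^ 0 * uypow F q 0 * uz F q ^ t) := by
  simp [uypow_zero, pow_succ', mul_assoc]

lemma revZ (hq0 : q ≠ 0) (hq2 : q ^ 2 ≠ 1) :
    ∀ (n : ℕ) (r t : ℕ) (s : ℤ), r + s.natAbs + t = n →
      ((r:ℤ) + s + t) % 2 = 0 →
      ux F q ^ r * uypow F q s * uz F q ^ t ∈ Afull F q := by
  intro n
  induction n using Nat.strong_induction_on with
  | _ n ih =>
    intro r t s hn hp
    rcases r with _ | _ | r
    · rcases lt_trichotomy s 0 with hneg | rfl | hpos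
      · rcases eq_or_lt_of_le (show s ≤ -1 by omega) with h1 | h1
        · rcases t with _ | t
          · omega
          · rw [h1, ey'zZ]
            exact mul_mem (m_y'z hq0)
              (ih (0+(0:ℤ).natAbs+t) (by omega) 0 t 0 rfl (by push_cast; omega))
        · rw [e2y'Z t s (by omega)]
          exact mul_mem m_y'y'
            (ih (0+(s+2).natAbs+t) (by omega) 0 t (s+2) rfl (by push_cast at hp ⊢; omega))
      · rcases t with _ | _ | t
        · simpa [uypow_zero] using one_mem (Afull F q)
        · omega
        · rw [e2zZ]
          exact mul_mem (Aprime_le_Afull (m_zz hq0 hq2))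
            (ih (0+(0:ℤ).natAbs+t) (by omega) 0 t 0 rfl (by push_cast; omega))
      · rcases eq_or_lt_of_le (show 1 ≤ s by omega) with h1 | h1
        · rcases t with _ | t
          · omega
          · rw [← h1, eyzZ]
            exact mul_mem (Aprime_le_Afull (m_yz hq0))
              (ih (0+(0:ℤ).natAbs+t) (by omega) 0 t 0 rfl (by push_cast; omega))
        · rw [e2yZ t s (by omega)]
          exact mul_mem (Aprime_le_Afull (m_yy hq0 hq2))
            (ih (0+(s-2).natAbs+t) (by omega) 0 t (s-2) rfl (by push_cast at hp ⊢; omega))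
    · rcases lt_trichotomy s 0 with hneg | rfl | hpos
      · rw [exy'Z t s hneg]
        exact mul_mem (m_xy' hq0)
          (ih (0+(s+1).natAbs+t) (by omega) 0 t (s+1) rfl (by push_cast at hp ⊢; omega))
      · rcases t with _ | t
        · omega
        · rw [exzZ]
          exact mul_mem (Aprime_le_Afull (m_xz hq0))
            (ih (0+(0:ℤ).natAbs+t) (by omega) 0 t 0 rfl (by push_cast; omega))
      · rw [exyZ t s hpos]
        exact mul_mem (Aprime_le_Afull (m_xy hq0))
          (ih (0+(s-1).natAbs+t) (by omega) 0 t (s-1) rfl (by push_cast at hp ⊢; omega))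
    · rw [e2xZ]
      exact mul_mem (Aprime_le_Afull (m_xx hq0 hq2))
        (ih (r+s.natAbs+t) (by omega) r t s rfl (by push_cast at hp ⊢; omega))

end Reverse
/-- **Proposition 5.5.** (i) `U_even` is generated as an `𝔽`-algebra by
`ν_x, ν_y, ν_z, y⁻²`.  (ii) `U′_even` is generated as an `𝔽`-algebra by
`ν_x, ν_y, ν_z`. -/
theorem statement10 (F : Type*) [Field F] (q : F) (hq0 : q ≠ 0) (hq4 : q ^ 4 ≠ 1) :
    Subalgebra.toSubmodule
        (Algebra.adjoin F {nux F q, nuy F q, nuz F q, uy' F q ^ 2}) = Ueven F q ∧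
    Subalgebra.toSubmodule
        (Algebra.adjoin F {nux F q, nuy F q, nuz F q}) = Uprimeeven F q := by
  have hq2 : q ^ 2 ≠ 1 := by
    intro h
    apply hq4
    rw [show (4:ℕ) = 2*2 from rfl, pow_mul, h, one_pow]
  constructor
  · apply le_antisymm
    · intro u hu
      rw [Subalgebra.mem_toSubmodule] at hu
      rw [Ueven_eq_VV0]
      exact Afull_le_VV hq0 hu
    · rw [Ueven]
      apply Submodule.span_le.mpr
      rintro m ⟨r, t, s, hev, rfl⟩
      rw [SetLike.mem_coe, Subalgebra.mem_toSubmodule]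
      exact revZ hq0 hq2 (r + s.natAbs + t) r t s rfl (Int.even_iff.mp hev)
  · apply le_antisymm
    · intro u hu
      rw [Subalgebra.mem_toSubmodule] at hu
      rw [Uprimeeven_eq_VN0]
      exact Aprime_le_VN hq0 hu
    · rw [Uprimeeven]
      apply Submodule.span_le.mpr
      rintro m ⟨r, s, t, hev, rfl⟩
      rw [SetLike.mem_coe, Subalgebra.mem_toSubmodule]
      exact revN hq0 hq2 (r + s + t) r s t rfl (Nat.even_iff.mp hev)

end Paper
end

section
/- In U_q(𝔰𝔩₂) the following relation holds: y²A − (q² + q⁻²)yAy + Ay² = −(a + a⁻¹)(q − q⁻¹)² y. -/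
namespace Paper


lemma aux {F : Type*} [Field F] {R : Type*} [Ring R] [Algebra F R]
    (u w : R) (α β γ : F) (hα : α ≠ 0) (hγ : γ = α + α⁻¹)
    (h : w * u = α • (u * w) + β • (1 : R)) :
    u ^ 2 * w - γ • (u * w * u) + w * u ^ 2 = (β * (1 - α⁻¹)) • u := by
  have h2 : u * w * u = α • (u ^ 2 * w) + β • u := by
    rw [mul_assoc, h, mul_add, mul_smul_comm, mul_smul_comm, mul_one, ← mul_assoc, ← pow_two]
  have h3 : w * u ^ 2 = α • (u * w * u) + β • u := by
    rw [pow_two, ← mul_assoc, h, add_mul, smul_mul_assoc, smul_mul_assoc, one_mul]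
  rw [h3, h2, hγ]
  match_scalars <;> field_simp <;> ring

/-- **Corollary 7.13.** In `U_q(sl2)`:
`y²A − (q² + q⁻²)yAy + Ay² = −(a + a⁻¹)(q − q⁻¹)² y`. -/
theorem statement12 (F : Type*) [Field F] (q : F) (hq0 : q ≠ 0) (hq4 : q ^ 4 ≠ 1)
    (a : F) (ha0 : a ≠ 0) (ha2 : a ^ 2 ≠ 1) :
    uy F q ^ 2 * uA F q a - (q ^ 2 + (q ^ 2)⁻¹) • (uy F q * uA F q a * uy F q)
        + uA F q a * uy F q ^ 2
      = (-((a + a⁻¹) * (q - q⁻¹) ^ 2)) • uy F q:= by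
  have hxy : ux F q * uy F q
      = (q⁻¹ * q⁻¹) • (uy F q * ux F q) + (q⁻¹ * (q - q⁻¹)) • (1 : Usl2 F q) := by
    have h := RingQuot.mkAlgHom_rel F (EqRel.xy (F := F) (q := q))
    simp only [map_sub, map_smul, map_mul, map_one] at h
    have h' := congrArg (fun v => q⁻¹ • v) h
    simp only [smul_sub, smul_smul, inv_mul_cancel₀ hq0, one_smul] at h'
    rw [sub_eq_iff_eq_add] at h'
    simp only [ux, uy]
    rw [h', add_comm]
  have hzy : uz F q * uy F q
      = (q * q) • (uy F q * uz F q) + (-(q * (q - q⁻¹))) • (1 : Usl2 F q) := by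
    have h := RingQuot.mkAlgHom_rel F (EqRel.yz (F := F) (q := q))
    simp only [map_sub, map_smul, map_mul, map_one] at h
    have h' := congrArg (fun v => q • v) h
    simp only [smul_sub, smul_smul, mul_inv_cancel₀ hq0, one_smul] at h'
    rw [sub_eq_iff_eq_add, ← sub_eq_iff_eq_add'] at h'
    simp only [uz, uy]
    rw [← h']
    module
  have hαx : (q⁻¹ * q⁻¹ : F) ≠ 0 := mul_ne_zero (inv_ne_zero hq0) (inv_ne_zero hq0)
  have hαz : (q * q : F) ≠ 0 := mul_ne_zero hq0 hq0
  have hγx : (q ^ 2 + (q ^ 2)⁻¹ : F) = q⁻¹ * q⁻¹ + (q⁻¹ * q⁻¹)⁻¹ := by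
    field_simp
    ring
  have hγz : (q ^ 2 + (q ^ 2)⁻¹ : F) = q * q + (q * q)⁻¹ := by
    field_simp
  have kx := aux (uy F q) (ux F q) (q⁻¹ * q⁻¹) (q⁻¹ * (q - q⁻¹))
      (q ^ 2 + (q ^ 2)⁻¹) hαx hγx hxy
  have kz := aux (uy F q) (uz F q) (q * q) (-(q * (q - q⁻¹)))
      (q ^ 2 + (q ^ 2)⁻¹) hαz hγz hzy
  have key : uy F q ^ 2 * uA F q a - (q ^ 2 + (q ^ 2)⁻¹) • (uy F q * uA F q a * uy F q)
        + uA F q a * uy F q ^ 2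
      = a⁻¹ • (uy F q ^ 2 * ux F q - (q ^ 2 + (q ^ 2)⁻¹) • (uy F q * ux F q * uy F q)
            + ux F q * uy F q ^ 2)
        + a • (uy F q ^ 2 * uz F q - (q ^ 2 + (q ^ 2)⁻¹) • (uy F q * uz F q * uy F q)
            + uz F q * uy F q ^ 2) := by
    simp only [uA, mul_add, add_mul, smul_mul_assoc, mul_smul_comm, smul_add, smul_sub,
      smul_smul]
    module
  rw [key, kx, kz]
  match_scalars
  field_simp
  ring

end Paper
end

section
/- In U_q(𝔰𝔩₂) the elements A and y satisfy the tridiagonal relations: y³A − [3]_q y²Ay + [3]_q yAy² − Ay³ = 0, and A³y − [3]_q A²yA + [3]_q AyA² − yA³ = (q² − q⁻²)²(yA − Ay), where [3]_q = (q³ − q⁻³)/(q − q⁻¹). -/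
namespace Paper


set_option maxHeartbeats 1600000

private theorem tri {F R : Type*} [Field F] [Ring R] [Algebra F R] (q a : F)
    (hq0 : q ≠ 0) (hq4 : q ^ 4 ≠ 1) (ha0 : a ≠ 0)
    (x y z A : R)
    (h1 : q • (x * y) - q⁻¹ • (y * x) = (q - q⁻¹) • (1 : R))
    (h2 : q • (y * z) - q⁻¹ • (z * y) = (q - q⁻¹) • (1 : R))
    (h3 : q • (z * x) - q⁻¹ • (x * z) = (q - q⁻¹) • (1 : R))
    (hA : A = a⁻¹ • x + a • z) :
    (y ^ 3 * A
        - ((q ^ 3 - (q ^ 3)⁻¹) / (q - q⁻¹)) • (y ^ 2 * A * y)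
        + ((q ^ 3 - (q ^ 3)⁻¹) / (q - q⁻¹)) • (y * A * y ^ 2)
        - A * y ^ 3 = 0) ∧
    (A ^ 3 * y
        - ((q ^ 3 - (q ^ 3)⁻¹) / (q - q⁻¹)) • (A ^ 2 * y * A)
        + ((q ^ 3 - (q ^ 3)⁻¹) / (q - q⁻¹)) • (A * y * A ^ 2)
        - y * A ^ 3
      = ((q ^ 2 - (q ^ 2)⁻¹) ^ 2) • (y * A - A * y)) := by
  have hxy : x * y = (q⁻¹ * q⁻¹) • (y * x) + (q⁻¹ * (q - q⁻¹)) • (1 : R) := by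
    have h := congrArg (fun t => q⁻¹ • t) h1
    simp only [smul_sub, smul_smul, inv_mul_cancel₀ hq0, one_smul] at h
    rw [← h]; abel
  have hzy : z * y = (q * q) • (y * z) + (-(q * (q - q⁻¹))) • (1 : R) := by
    have h := congrArg (fun t => q • t) h2
    simp only [smul_sub, smul_smul, mul_inv_cancel₀ hq0, one_smul] at h
    rw [neg_smul, ← sub_eq_add_neg, ← h]; abel
  have hzx : z * x = (q⁻¹ * q⁻¹) • (x * z) + (q⁻¹ * (q - q⁻¹)) • (1 : R) := by
    have h := congrArg (fun t => q⁻¹ • t) h3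
    simp only [smul_sub, smul_smul, inv_mul_cancel₀ hq0, one_smul] at h
    rw [← h]; abel
  have hq2 : q ^ 2 - 1 ≠ 0 := by
    intro h
    apply hq4
    have h2 : q ^ 2 = 1 := sub_eq_zero.mp h
    calc q ^ 4 = (q ^ 2) ^ 2 := by ring
    _ = 1 := by rw [h2]; ring
  have hqq : q - q⁻¹ ≠ 0 := by
    intro h
    apply hq2
    have h' : q = q⁻¹ := sub_eq_zero.mp h
    rw [sub_eq_zero]
    calc q ^ 2 = q * q := sq q
    _ = q * q⁻¹ := by rw [← h']
    _ = 1 := mul_inv_cancel₀ hq0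
  have hxy' : ∀ w : R, x * (y * w) = (q⁻¹ * q⁻¹) • (y * (x * w)) + (q⁻¹ * (q - q⁻¹)) • w := by
    intro w
    have := congrArg (· * w) hxy
    simpa [mul_assoc, add_mul, smul_mul_assoc] using this
  have hzy' : ∀ w : R, z * (y * w) = (q * q) • (y * (z * w)) + (-(q * (q - q⁻¹))) • w := by
    intro w
    have := congrArg (· * w) hzy
    simpa [mul_assoc, add_mul, smul_mul_assoc] using this
  have hzx' : ∀ w : R, z * (x * w) = (q⁻¹ * q⁻¹) • (x * (z * w)) + (q⁻¹ * (q - q⁻¹)) • w := by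
    intro w
    have := congrArg (· * w) hzx
    simpa [mul_assoc, add_mul, smul_mul_assoc] using this
  have ht3 : (q ^ 3 - (q ^ 3)⁻¹) / (q - q⁻¹) = q ^ 2 + 1 + q⁻¹ ^ 2 := by
    rw [div_eq_iff hqq]
    field_simp
    ring
  have hq : q * q⁻¹ = 1 := mul_inv_cancel₀ hq0
  have ha : a * a⁻¹ = 1 := mul_inv_cancel₀ ha0
  subst hA
  rw [ht3]
  constructor
  · simp only [pow_succ, pow_zero, one_mul, mul_add, add_mul, smul_mul_assoc,
      mul_smul_comm, smul_add, smul_smul, mul_assoc, mul_one,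
      hxy, hxy', hzy, hzy', hzx, hzx']
    match_scalars
    · linear_combination ((-1 : F) * a⁻¹ + q⁻¹ ^ 2 * a⁻¹ + (-1 : F) * q * q⁻¹ * a⁻¹ + q * q⁻¹ ^ 3 * a⁻¹) * hq + (0 : F) * ha
    · linear_combination ((-1 : F) * a + (-1 : F) * q * q⁻¹ * a + q ^ 2 * a + q ^ 3 * q⁻¹ * a) * hq + (0 : F) * ha
    · linear_combination ((-1 : F) * q⁻¹ ^ 2 * a⁻¹ + q * q⁻¹ * a⁻¹ + q * q⁻¹ * a + (-1 : F) * q * q⁻¹ ^ 3 * a⁻¹ + (-1 : F) * q ^ 2 * a + q ^ 2 * q⁻¹ ^ 2 * a⁻¹ + q ^ 2 * q⁻¹ ^ 2 * a + (-1 : F) * q ^ 3 * q⁻¹ * a) * hq + (0 : F) * ha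
  · simp only [pow_succ, pow_zero, one_mul, mul_add, add_mul, smul_mul_assoc,
      mul_smul_comm, smul_add, smul_smul, mul_assoc, mul_one,
      hxy, hxy', hzy, hzy', hzx, hzx']
    match_scalars
    · linear_combination (a⁻¹ ^ 3 + (-1 : F) * q⁻¹ ^ 2 * a⁻¹ ^ 3 + q * q⁻¹ * a⁻¹ ^ 3 + (-1 : F) * q * q⁻¹ ^ 3 * a⁻¹ ^ 3) * hq + (0 : F) * ha
    · linear_combination (q⁻¹ ^ 2 * a⁻¹ ^ 3 + (-1 : F) * q * q⁻¹ * a⁻¹ ^ 3 + (-1 : F) * q * q⁻¹ * a * a⁻¹ ^ 2 + q * q⁻¹ ^ 3 * a⁻¹ ^ 3 + q ^ 2 * a * a⁻¹ ^ 2 + (-1 : F) * q ^ 2 * q⁻¹ ^ 2 * a⁻¹ ^ 3 + (-1 : F) * q ^ 2 * q⁻¹ ^ 2 * a * a⁻¹ ^ 2 + q ^ 3 * q⁻¹ * a * a⁻¹ ^ 2) * hq + (0 : F) * ha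
    · linear_combination (a * a⁻¹ ^ 2 + q * q⁻¹ * a * a⁻¹ ^ 2 + (-1 : F) * q ^ 2 * q⁻¹ ^ 4 * a * a⁻¹ ^ 2 + (-1 : F) * q ^ 3 * q⁻¹ ^ 5 * a * a⁻¹ ^ 2) * hq + (0 : F) * ha
    · linear_combination ((-1 : F) * q * q⁻¹ * a ^ 2 * a⁻¹ + q ^ 2 * a ^ 2 * a⁻¹ + q ^ 2 * q⁻¹ ^ 2 * a * a⁻¹ ^ 2 + (-1 : F) * q ^ 2 * q⁻¹ ^ 2 * a ^ 2 * a⁻¹ + q ^ 2 * q⁻¹ ^ 4 * a * a⁻¹ ^ 2 + (-1 : F) * q ^ 3 * q⁻¹ * a * a⁻¹ ^ 2 + q ^ 3 * q⁻¹ ^ 5 * a * a⁻¹ ^ 2 + q ^ 4 * a ^ 2 * a⁻¹ + (-1 : F) * q ^ 4 * q⁻¹ ^ 2 * a * a⁻¹ ^ 2 + (-1 : F) * q ^ 4 * q⁻¹ ^ 2 * a ^ 2 * a⁻¹ + (-1 : F) * q ^ 4 * q⁻¹ ^ 4 * a * a⁻¹ ^ 2 + q ^ 5 * q⁻¹ *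 a ^ 2 * a⁻¹) * hq + (0 : F) * ha
    · linear_combination ((2 : F) * a⁻¹ + (-2 : F) * a * a⁻¹ ^ 2 + (-2 : F) * q⁻¹ ^ 2 * a⁻¹ + (-1 : F) * q⁻¹ ^ 2 * a * a⁻¹ ^ 2 + (2 : F) * q⁻¹ ^ 4 * a * a⁻¹ ^ 2 + q⁻¹ ^ 6 * a * a⁻¹ ^ 2 + (2 : F) * q * q⁻¹ * a⁻¹ + q * q⁻¹ * a * a⁻¹ ^ 2 + (-2 : F) * q * q⁻¹ ^ 3 * a⁻¹ + (-2 : F) * q * q⁻¹ ^ 3 * a * a⁻¹ ^ 2 + q * q⁻¹ ^ 7 * a * a⁻¹ ^ 2 + q ^ 2 * a⁻¹ + (-1 : F) * q ^ 2 * a * a⁻¹ ^ 2 + q ^ 2 * q⁻¹ ^ 2 * a * a⁻¹ ^ 2 + (-1 : F) * q ^ 2 * q⁻¹ ^ 6 * a * a⁻¹ ^ 2 + q ^ 3 * q⁻¹ * a⁻¹ + (-1 : F) * q ^ 3 * q⁻¹ * a * a⁻¹ ^ 2 + (-1 : F) * q ^ 3 * q⁻¹ ^ 3 * a * a⁻¹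 ^ 2 + q ^ 3 * q⁻¹ ^ 5 * a * a⁻¹ ^ 2 + q ^ 4 * a * a⁻¹ ^ 2 + (-1 : F) * q ^ 4 * q⁻¹ ^ 4 * a * a⁻¹ ^ 2) * hq + ((-2 : F) * a⁻¹ + (2 : F) * q⁻¹ ^ 2 * a⁻¹ + q⁻¹ ^ 4 * a⁻¹ + (-1 : F) * q⁻¹ ^ 6 * a⁻¹ + (-1 : F) * q ^ 2 * a⁻¹ + q ^ 4 * a⁻¹) * ha
    · linear_combination ((-2 : F) * a⁻¹ + (-2 : F) * a + (2 : F) * a * a⁻¹ ^ 2 + (2 : F) * a ^ 2 * a⁻¹ + (2 : F) * q⁻¹ ^ 2 * a⁻¹ + (-1 : F) * q⁻¹ ^ 2 * a + (-2 : F) * q⁻¹ ^ 2 * a * a⁻¹ ^ 2 + q⁻¹ ^ 2 * a ^ 2 * a⁻¹ + q⁻¹ ^ 4 * a⁻¹ + q⁻¹ ^ 4 * a + (-4 : F) * q⁻¹ ^ 4 * a * a⁻¹ ^ 2 + (-1 : F) * q⁻¹ ^ 4 * a ^ 2 * a⁻¹ + (-1 : F) * q⁻¹ ^ 6 * a * a⁻¹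 ^ 2 + (-2 : F) * q * q⁻¹ * a⁻¹ + (-2 : F) * q * q⁻¹ * a + (2 : F) * q * q⁻¹ * a * a⁻¹ ^ 2 + (2 : F) * q * q⁻¹ * a ^ 2 * a⁻¹ + (2 : F) * q * q⁻¹ ^ 3 * a⁻¹ + (-1 : F) * q * q⁻¹ ^ 3 * a + (4 : F) * q * q⁻¹ ^ 3 * a * a⁻¹ ^ 2 + (3 : F) * q * q⁻¹ ^ 3 * a ^ 2 * a⁻¹ + (-1 : F) * q * q⁻¹ ^ 7 * a * a⁻¹ ^ 2 + (-1 : F) * q ^ 2 * a⁻¹ + (2 : F) * q ^ 2 * a + q ^ 2 * a * a⁻¹ ^ 2 + (-2 : F) * q ^ 2 * a ^ 2 * a⁻¹ + (-2 : F) * q ^ 2 * q⁻¹ ^ 2 * a⁻¹ + (-2 : F) * q ^ 2 * q⁻¹ ^ 2 * a + (-1 : F) * q ^ 2 * q⁻¹ ^ 2 * a * a⁻¹ ^ 2 + (-2 : F) * q ^ 2 * q⁻¹ ^ 2 * a ^ 2 * a⁻¹ + (2 : F) * q ^ 2 * q⁻¹ ^ 4 * a * a⁻¹ ^ 2 + q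 ^ 2 * q⁻¹ ^ 4 * a ^ 2 * a⁻¹ + (2 : F) * q ^ 2 * q⁻¹ ^ 6 * a * a⁻¹ ^ 2 + (-1 : F) * q ^ 3 * q⁻¹ * a⁻¹ + (2 : F) * q ^ 3 * q⁻¹ * a + q ^ 3 * q⁻¹ * a * a⁻¹ ^ 2 + (-1 : F) * q ^ 3 * q⁻¹ ^ 3 * a * a⁻¹ ^ 2 + (-2 : F) * q ^ 3 * q⁻¹ ^ 3 * a ^ 2 * a⁻¹ + (-2 : F) * q ^ 3 * q⁻¹ ^ 5 * a * a⁻¹ ^ 2 + q ^ 4 * a⁻¹ + q ^ 4 * a + (-1 : F) * q ^ 4 * a * a⁻¹ ^ 2 + (-1 : F) * q ^ 4 * a ^ 2 * a⁻¹ + q ^ 4 * q⁻¹ ^ 2 * a * a⁻¹ ^ 2 + (2 : F) * q ^ 4 * q⁻¹ ^ 2 * a ^ 2 * a⁻¹ + (2 : F) * q ^ 4 * q⁻¹ ^ 4 * a * a⁻¹ ^ 2 + (-1 : F) * q ^ 5 * q⁻¹ * a * a⁻¹ ^ 2 + (-2 : F) * q ^ 5 * q⁻¹ * a ^ 2 *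 a⁻¹ + (-1 : F) * q ^ 5 * q⁻¹ ^ 3 * a * a⁻¹ ^ 2 + q ^ 6 * a ^ 2 * a⁻¹) * hq + ((2 : F) * a⁻¹ + (2 : F) * a + (-2 : F) * q⁻¹ ^ 2 * a⁻¹ + q⁻¹ ^ 2 * a + (-1 : F) * q⁻¹ ^ 4 * a⁻¹ + (-1 : F) * q⁻¹ ^ 4 * a + q⁻¹ ^ 6 * a⁻¹ + q ^ 2 * a⁻¹ + (-2 : F) * q ^ 2 * a + (-1 : F) * q ^ 4 * a⁻¹ + (-1 : F) * q ^ 4 * a + q ^ 6 * a) * ha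
    · linear_combination (a ^ 2 * a⁻¹ + q * q⁻¹ * a ^ 2 * a⁻¹ + (-1 : F) * q ^ 4 * q⁻¹ ^ 2 * a ^ 2 * a⁻¹ + (-1 : F) * q ^ 5 * q⁻¹ ^ 3 * a ^ 2 * a⁻¹) * hq + (0 : F) * ha
    · linear_combination (q⁻¹ ^ 2 * a ^ 2 * a⁻¹ + q⁻¹ ^ 4 * a ^ 2 * a⁻¹ + (-1 : F) * q * q⁻¹ * a ^ 2 * a⁻¹ + (-1 : F) * q * q⁻¹ * a ^ 3 + q * q⁻¹ ^ 5 * a ^ 2 * a⁻¹ + q ^ 2 * a ^ 3 + (-1 : F) * q ^ 2 * q⁻¹ ^ 2 * a ^ 2 * a⁻¹ + (-1 : F) * q ^ 2 * q⁻¹ ^ 2 * a ^ 3 + (-2 : F) * q ^ 2 * q⁻¹ ^ 4 * a ^ 2 * a⁻¹ + q ^ 3 * q⁻¹ * a ^ 3 + q ^ 3 * q⁻¹ ^ 3 * a ^ 2 * a⁻¹ + (-1 : F) * q ^ 3 * q⁻¹ ^ 5 * a ^ 2 * a⁻¹ + q ^ 4 * q⁻¹ ^ 4 * a ^ 2 *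 a⁻¹) * hq + (0 : F) * ha
    · linear_combination ((2 : F) * a + (-2 : F) * a ^ 2 * a⁻¹ + q⁻¹ ^ 2 * a + (-4 : F) * q⁻¹ ^ 2 * a ^ 2 * a⁻¹ + (-1 : F) * q⁻¹ ^ 4 * a ^ 2 * a⁻¹ + (2 : F) * q * q⁻¹ * a + q * q⁻¹ * a ^ 2 * a⁻¹ + q * q⁻¹ ^ 3 * a + (-2 : F) * q * q⁻¹ ^ 3 * a ^ 2 * a⁻¹ + (-1 : F) * q * q⁻¹ ^ 5 * a ^ 2 * a⁻¹ + (-2 : F) * q ^ 2 * a + (2 : F) * q ^ 2 * a ^ 2 * a⁻¹ + (4 : F) * q ^ 2 * q⁻¹ ^ 2 * a ^ 2 * a⁻¹ + (2 : F) * q ^ 2 * q⁻¹ ^ 4 * a ^ 2 * a⁻¹ + (-2 : F) * q ^ 3 * q⁻¹ * a + (-1 : F) * q ^ 3 * q⁻¹ * a ^ 2 * a⁻¹ + q ^ 3 * q⁻¹ ^ 5 * a ^ 2 * a⁻¹ + q ^ 4 * a ^ 2 * a⁻¹ + (-1 : F) * q ^ 4 * q⁻¹ ^ 4 * a ^ 2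 * a⁻¹ + q ^ 5 * q⁻¹ ^ 3 * a ^ 2 * a⁻¹ + (-1 : F) * q ^ 6 * a ^ 2 * a⁻¹ + (-1 : F) * q ^ 6 * q⁻¹ ^ 2 * a ^ 2 * a⁻¹) * hq + ((-2 : F) * a + (-1 : F) * q⁻¹ ^ 2 * a + q⁻¹ ^ 4 * a + (2 : F) * q ^ 2 * a + q ^ 4 * a + (-1 : F) * q ^ 6 * a) * ha
    · linear_combination (a ^ 3 + q * q⁻¹ * a ^ 3 + (-1 : F) * q ^ 2 * a ^ 3 + (-1 : F) * q ^ 3 * q⁻¹ * a ^ 3) * hq + (0 : F) * ha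


/-- **Proposition 7.16 (tridiagonal relations).** In `U_q(sl2)`:
`y³A − [3]_q y²Ay + [3]_q yAy² − Ay³ = 0` and
`A³y − [3]_q A²yA + [3]_q AyA² − yA³ = (q² − q⁻²)²(yA − Ay)`,
where `[3]_q = (q³ − q⁻³)/(q − q⁻¹)`. -/
theorem statement14 (F : Type*) [Field F] (q : F) (hq0 : q ≠ 0) (hq4 : q ^ 4 ≠ 1)
    (a : F) (ha0 : a ≠ 0) (ha2 : a ^ 2 ≠ 1) :
    (uy F q ^ 3 * uA F q a
        - ((q ^ 3 - (q ^ 3)⁻¹) / (q - q⁻¹)) • (uy F q ^ 2 * uA F q a * uy F q)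
        + ((q ^ 3 - (q ^ 3)⁻¹) / (q - q⁻¹)) • (uy F q * uA F q a * uy F q ^ 2)
        - uA F q a * uy F q ^ 3 = 0) ∧
    (uA F q a ^ 3 * uy F q
        - ((q ^ 3 - (q ^ 3)⁻¹) / (q - q⁻¹)) • (uA F q a ^ 2 * uy F q * uA F q a)
        + ((q ^ 3 - (q ^ 3)⁻¹) / (q - q⁻¹)) • (uA F q a * uy F q * uA F q a ^ 2)
        - uy F q * uA F q a ^ 3
      = ((q ^ 2 - (q ^ 2)⁻¹) ^ 2) •
          (uy F q * uA F q a - uA F q a * uy F q)) := by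
  have h1 : q • (ux F q * uy F q) - q⁻¹ • (uy F q * ux F q)
      = (q - q⁻¹) • (1 : Usl2 F q) := by
    simpa only [map_sub, map_smul, map_mul, map_one, ux, uy] using
      RingQuot.mkAlgHom_rel F (EqRel.xy (F := F) (q := q))
  have h2 : q • (uy F q * uz F q) - q⁻¹ • (uz F q * uy F q)
      = (q - q⁻¹) • (1 : Usl2 F q) := by
    simpa only [map_sub, map_smul, map_mul, map_one, uy, uz] using
      RingQuot.mkAlgHom_rel F (EqRel.yz (F := F) (q := q))
  have h3 : q • (uz F q * ux F q) - q⁻¹ • (ux F q * uz F q)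
      = (q - q⁻¹) • (1 : Usl2 F q) := by
    simpa only [map_sub, map_smul, map_mul, map_one, ux, uz] using
      RingQuot.mkAlgHom_rel F (EqRel.zx (F := F) (q := q))
  exact tri q a hq0 hq4 ha0 (ux F q) (uy F q) (uz F q) (uA F q a) h1 h2 h3 rfl

end Paper
end

section
/- In U_q(𝔰𝔩₂) the Casimir element satisfies Λ · (q − q⁻¹)(q² − q⁻²) = A²y − (q² + q⁻²)AyA + yA² + (q² − q⁻²)² y + (a + a⁻¹)(q − q⁻¹)² A. -/
namespace Paper


/-- The Casimir element `Λ = qx + q⁻¹y + qz − qxyz`. -/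
noncomputable def casimir (F : Type*) [Field F] (q : F) : Usl2 F q :=
  q • ux F q + q⁻¹ • uy F q + q • uz F q - q • (ux F q * uy F q * uz F q)

private lemma pc_aux {F : Type*} [Field F] {x : F} (hx : x ≠ 0) (n : ℕ) :
    x ^ n * x⁻¹ ^ n = 1 := by
  rw [← mul_pow, mul_inv_cancel₀ hx, one_pow]

set_option maxHeartbeats 1000000000

/-- **Lemma 7.12.** In `U_q(sl2)` the Casimir element satisfies
`Λ (q − q⁻¹)(q² − q⁻²) = A²y − (q² + q⁻²)AyA + yA² + (q² − q⁻²)² y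
  + (a + a⁻¹)(q − q⁻¹)² A`. -/
theorem statement15 (F : Type*) [Field F] (q : F) (hq0 : q ≠ 0) (hq4 : q ^ 4 ≠ 1)
    (a : F) (ha0 : a ≠ 0) (ha2 : a ^ 2 ≠ 1) :
    ((q - q⁻¹) * (q ^ 2 - (q ^ 2)⁻¹)) • casimir F q
      = uA F q a ^ 2 * uy F q
        - (q ^ 2 + (q ^ 2)⁻¹) • (uA F q a * uy F q * uA F q a)
        + uy F q * uA F q a ^ 2
        + ((q ^ 2 - (q ^ 2)⁻¹) ^ 2) • uy F q
        + ((a + a⁻¹) * (q - q⁻¹) ^ 2) • uA F q a := by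
  set X := ux F q with hX
  set Y := uy F q with hY
  set Z := uz F q with hZ
  -- the three defining relations in the quotient
  have rxy : q • (X * Y) - q⁻¹ • (Y * X) = (q - q⁻¹) • (1 : Usl2 F q) := by
    simpa [hX, hY, ux, uy, map_sub, map_smul, map_mul, map_one] using
      RingQuot.mkAlgHom_rel F (EqRel.xy (F := F) (q := q))
  have ryz : q • (Y * Z) - q⁻¹ • (Z * Y) = (q - q⁻¹) • (1 : Usl2 F q) := by
    simpa [hY, hZ, uy, uz, map_sub, map_smul, map_mul, map_one] using
      RingQuot.mkAlgHom_rel F (EqRel.yz (F := F) (q := q))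
  have rzx : q • (Z * X) - q⁻¹ • (X * Z) = (q - q⁻¹) • (1 : Usl2 F q) := by
    simpa [hZ, hX, uz, ux, map_sub, map_smul, map_mul, map_one] using
      RingQuot.mkAlgHom_rel F (EqRel.zx (F := F) (q := q))
  have hqq : q⁻¹ * q = 1 := inv_mul_cancel₀ hq0
  have hqq' : q * q⁻¹ = 1 := mul_inv_cancel₀ hq0
  -- oriented rewrite rules pushing `Y` to the left and `X` before `Z`
  have hXY : X * Y = (q⁻¹ * q⁻¹) • (Y * X) + (q⁻¹ * (q - q⁻¹)) • (1 : Usl2 F q) := by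
    have h2 : q • (X * Y) = q⁻¹ • (Y * X) + (q - q⁻¹) • (1 : Usl2 F q) := by
      rw [← rxy]; abel
    calc X * Y = q⁻¹ • (q • (X * Y)) := by rw [smul_smul, hqq, one_smul]
      _ = _ := by rw [h2, smul_add, smul_smul, smul_smul]
  have hZY : Z * Y = (q * q) • (Y * Z) - (q * (q - q⁻¹)) • (1 : Usl2 F q) := by
    have h2 : q⁻¹ • (Z * Y) = q • (Y * Z) - (q - q⁻¹) • (1 : Usl2 F q) := by
      rw [← ryz]; abel
    calc Z * Y = q • (q⁻¹ • (Z * Y)) := by rw [smul_smul, hqq', one_smul]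
      _ = _ := by rw [h2, smul_sub, smul_smul, smul_smul]
  have hZX : Z * X = (q⁻¹ * q⁻¹) • (X * Z) + (q⁻¹ * (q - q⁻¹)) • (1 : Usl2 F q) := by
    have h2 : q • (Z * X) = q⁻¹ • (X * Z) + (q - q⁻¹) • (1 : Usl2 F q) := by
      rw [← rzx]; abel
    calc Z * X = q⁻¹ • (q • (Z * X)) := by rw [smul_smul, hqq, one_smul]
      _ = _ := by rw [h2, smul_add, smul_smul, smul_smul]
  -- nested versions for right-associated products
  have hXY' : ∀ w : Usl2 F q, X * (Y * w)
      = (q⁻¹ * q⁻¹) • (Y * (X * w)) + (q⁻¹ * (q - q⁻¹)) • w := by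
    intro w
    rw [← mul_assoc, hXY, add_mul, smul_mul_assoc, smul_mul_assoc, one_mul, mul_assoc]
  have hZY' : ∀ w : Usl2 F q, Z * (Y * w)
      = (q * q) • (Y * (Z * w)) - (q * (q - q⁻¹)) • w := by
    intro w
    rw [← mul_assoc, hZY, sub_mul, smul_mul_assoc, smul_mul_assoc, one_mul, mul_assoc]
  have hZX' : ∀ w : Usl2 F q, Z * (X * w)
      = (q⁻¹ * q⁻¹) • (X * (Z * w)) + (q⁻¹ * (q - q⁻¹)) • w := by
    intro w
    rw [← mul_assoc, hZX, add_mul, smul_mul_assoc, smul_mul_assoc, one_mul, mul_assoc]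
  simp only [casimir, uA, ← hX, ← hY, ← hZ, pow_two]
  simp only [mul_add, add_mul, smul_add, smul_sub, sub_mul, mul_sub, smul_mul_assoc,
    mul_smul_comm, smul_smul, mul_assoc, mul_one, one_mul,
    hXY, hZY, hZX, hXY', hZY', hZX']
  match_scalars <;> ring_nf
  all_goals (field_simp [hq0, ha0]; try ring)

end Paper
end

section
/- Let V be a U_q^∨-module that is a finite-dimensional 𝔽-vector space of positive dimension. Then the following are equivalent: (i) the action of U_q^∨ on V extends to an action of U_q(𝔰𝔩₂) on V (i.e., there is a U_q(𝔰𝔩₂)-module structure on V whose restriction to U_q^∨ is the given one); (ii) the element y⁻¹ acts on V as an invertible linear map; (iii) the element a⁻¹x − aX acts on V as an invertible linear map; (iv) the element az − a⁻¹Z acts on V as an invertible linear map. -/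
namespace Paper


lemma ux_mem (F : Type*) [Field F] (q : F) : ux F q ∈ Uvee F q :=
  Algebra.subset_adjoin (by simp)

lemma uy'_mem (F : Type*) [Field F] (q : F) : uy' F q ∈ Uvee F q :=
  Algebra.subset_adjoin (by simp)

lemma uz_mem (F : Type*) [Field F] (q : F) : uz F q ∈ Uvee F q :=
  Algebra.subset_adjoin (by simp)

lemma uX_mem (F : Type*) [Field F] (q a : F) : uX F q a ∈ Uvee F q :=
  add_mem ((Uvee F q).smul_mem (ux_mem F q) _) ((Uvee F q).smul_mem (uy'_mem F q) _)

lemma uZ_mem (F : Type*) [Field F] (q a : F) : uZ F q a ∈ Uvee F q :=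
  add_mem ((Uvee F q).smul_mem (uz_mem F q) _) ((Uvee F q).smul_mem (uy'_mem F q) _)


section Helpers

variable {F : Type*} [Field F] {q : F}

lemma y'y_left (t : Usl2 F q) : uy' F q * (uy F q * t) = t := by
  rw [← mul_assoc, rel_y'y, one_mul]

lemma yy'_left (t : Usl2 F q) : uy F q * (uy' F q * t) = t := by
  rw [← mul_assoc, rel_yy', one_mul]

lemma relA : q • (uy' F q * ux F q) - q⁻¹ • (ux F q * uy' F q)
    = (q - q⁻¹) • (uy' F q * uy' F q) := by
  have h := congrArg (fun t => uy' F q * t * uy' F q) (rel_xy (F := F) (q := q))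
  simpa only [mul_sub, sub_mul, mul_smul_comm, smul_mul_assoc, mul_one, one_mul,
    mul_assoc, rel_yy', rel_y'y, y'y_left, yy'_left] using h

lemma relB : q • (uz F q * uy' F q) - q⁻¹ • (uy' F q * uz F q)
    = (q - q⁻¹) • (uy' F q * uy' F q) := by
  have h := congrArg (fun t => uy' F q * t * uy' F q) (rel_yz (F := F) (q := q))
  simpa only [mul_sub, sub_mul, mul_smul_comm, smul_mul_assoc, mul_one, one_mul,
    mul_assoc, rel_yy', rel_y'y, y'y_left, yy'_left] using h

lemma smul_isUnit_iff {V : Type*} [AddCommGroup V] [Module F V] {c : F} (hc : c ≠ 0)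
    (T : Module.End F V) : IsUnit (c • T) ↔ IsUnit T := by
  have key : ∀ (d : F), d ≠ 0 → ∀ S : Module.End F V, IsUnit S → IsUnit (d • S) := by
    rintro d hd S ⟨u, rfl⟩
    refine isUnit_iff_exists.mpr ⟨d⁻¹ • ↑u⁻¹, ?_, ?_⟩
    · rw [smul_mul_smul_comm, u.mul_inv, mul_inv_cancel₀ hd, one_smul]
    · rw [smul_mul_smul_comm, u.inv_mul, inv_mul_cancel₀ hd, one_smul]
  constructor
  · intro h
    have := key c⁻¹ (inv_ne_zero hc) _ h
    rwa [smul_smul, inv_mul_cancel₀ hc, one_smul] at this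
  · exact key c hc T

end Helpers

/-- **Lemma 11.9.** Let `V` be a finite-dimensional `U_q^∨`-module of positive
dimension (given by `ρ : U_q^∨ → End(V)`). The following are equivalent:
(i) the `U_q^∨`-action extends to a `U_q(sl2)`-action on `V`;
(ii) `y⁻¹` acts invertibly on `V`;
(iii) `a⁻¹x − aX` acts invertibly on `V`;
(iv) `az − a⁻¹Z` acts invertibly on `V`. -/
theorem statement18 (F : Type*) [Field F] (q : F) (hq0 : q ≠ 0) (hq4 : q ^ 4 ≠ 1)
    (a : F) (ha0 : a ≠ 0) (ha2 : a ^ 2 ≠ 1)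
    (V : Type*) [AddCommGroup V] [Module F V] [FiniteDimensional F V]
    (hV : 0 < Module.finrank F V)
    (ρ : Uvee F q →ₐ[F] Module.End F V) :
    List.TFAE
      [ ∃ ρ' : Usl2 F q →ₐ[F] Module.End F V, ρ'.comp (Uvee F q).val = ρ,
        IsUnit (ρ ⟨uy' F q, uy'_mem F q⟩),
        IsUnit (ρ ⟨a⁻¹ • ux F q - a • uX F q a,
          sub_mem ((Uvee F q).smul_mem (ux_mem F q) _)
            ((Uvee F q).smul_mem (uX_mem F q a) _)⟩),
        IsUnit (ρ ⟨a • uz F q - a⁻¹ • uZ F q a,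
          sub_mem ((Uvee F q).smul_mem (uz_mem F q) _)
            ((Uvee F q).smul_mem (uZ_mem F q a) _)⟩) ] := by
  have hinv : a⁻¹ - a ≠ 0 := by
    intro h
    apply ha2
    rw [sub_eq_zero] at h
    rw [pow_two]
    nth_rewrite 1 [← h]
    exact inv_mul_cancel₀ ha0
  have hinv' : a - a⁻¹ ≠ 0 := by
    intro h
    apply hinv
    rw [sub_eq_zero] at h ⊢
    exact h.symm
  -- the elements in (iii) and (iv) are scalar multiples of y⁻¹
  have e3 : (⟨a⁻¹ • ux F q - a • uX F q a,
      sub_mem ((Uvee F q).smul_mem (ux_mem F q) _)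
        ((Uvee F q).smul_mem (uX_mem F q a) _)⟩ : Uvee F q)
      = (a⁻¹ - a) • ⟨uy' F q, uy'_mem F q⟩ := by
    apply Subtype.ext
    show a⁻¹ • ux F q - a • uX F q a = (a⁻¹ - a) • uy' F q
    rw [uX, smul_add, smul_smul, smul_smul,
      show a * (a ^ 2)⁻¹ = a⁻¹ by field_simp,
      show a * (1 - (a ^ 2)⁻¹) = a - a⁻¹ by field_simp]
    module
  have e4 : (⟨a • uz F q - a⁻¹ • uZ F q a,
      sub_mem ((Uvee F q).smul_mem (uz_mem F q) _)
        ((Uvee F q).smul_mem (uZ_mem F q a) _)⟩ : Uvee F q)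
      = (a - a⁻¹) • ⟨uy' F q, uy'_mem F q⟩ := by
    apply Subtype.ext
    show a • uz F q - a⁻¹ • uZ F q a = (a - a⁻¹) • uy' F q
    rw [uZ, smul_add, smul_smul, smul_smul,
      show a⁻¹ * a ^ 2 = a by field_simp,
      show a⁻¹ * (1 - a ^ 2) = a⁻¹ - a by field_simp]
    module
  tfae_have 2 ↔ 3 := by
    rw [e3, map_smul, smul_isUnit_iff hinv]
  tfae_have 2 ↔ 4 := by
    rw [e4, map_smul, smul_isUnit_iff hinv']
  tfae_have 1 → 2 := by
    rintro ⟨ρ', hρ'⟩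
    have hy' : ρ ⟨uy' F q, uy'_mem F q⟩ = ρ' (uy' F q) := by rw [← hρ']; rfl
    rw [hy']
    exact isUnit_iff_exists.mpr ⟨ρ' (uy F q),
      by rw [← map_mul, rel_y'y, map_one], by rw [← map_mul, rel_yy', map_one]⟩
  tfae_have 2 → 1 := by
    intro h2
    set AA := ρ ⟨ux F q, ux_mem F q⟩ with hAA
    set BB := ρ ⟨uy' F q, uy'_mem F q⟩ with hBB
    set CC := ρ ⟨uz F q, uz_mem F q⟩ with hCC
    obtain ⟨u, hu⟩ := h2
    set W : Module.End F V := ↑u⁻¹ with hW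
    have hw1 : W * BB = 1 := by rw [hW, ← hu]; exact u.inv_mul
    have hw2 : BB * W = 1 := by rw [hW, ← hu]; exact u.mul_inv
    have hwl : ∀ t : Module.End F V, W * (BB * t) = t := fun t => by
      rw [← mul_assoc, hw1, one_mul]
    have hbl : ∀ t : Module.End F V, BB * (W * t) = t := fun t => by
      rw [← mul_assoc, hw2, one_mul]
    -- identities satisfied by the images of x, y⁻¹, z
    have hA : q • (BB * AA) - q⁻¹ • (AA * BB) = (q - q⁻¹) • (BB * BB) := by
      have hUv : q • ((⟨uy' F q, uy'_mem F q⟩ : Uvee F q) * ⟨ux F q, ux_mem F q⟩)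
          - q⁻¹ • ((⟨ux F q, ux_mem F q⟩ : Uvee F q) * ⟨uy' F q, uy'_mem F q⟩)
          = (q - q⁻¹) • ((⟨uy' F q, uy'_mem F q⟩ : Uvee F q) * ⟨uy' F q, uy'_mem F q⟩) :=
        Subtype.ext relA
      have h2 := congrArg ρ hUv
      rw [map_sub ρ] at h2
      simp only [map_smul, map_mul] at h2
      exact h2
    have hB : q • (CC * BB) - q⁻¹ • (BB * CC) = (q - q⁻¹) • (BB * BB) := by
      have hUv : q • ((⟨uz F q, uz_mem F q⟩ : Uvee F q) * ⟨uy' F q, uy'_mem F q⟩)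
          - q⁻¹ • ((⟨uy' F q, uy'_mem F q⟩ : Uvee F q) * ⟨uz F q, uz_mem F q⟩)
          = (q - q⁻¹) • ((⟨uy' F q, uy'_mem F q⟩ : Uvee F q) * ⟨uy' F q, uy'_mem F q⟩) :=
        Subtype.ext relB
      have h2 := congrArg ρ hUv
      rw [map_sub ρ] at h2
      simp only [map_smul, map_mul] at h2
      exact h2
    have hC : q • (CC * AA) - q⁻¹ • (AA * CC) = (q - q⁻¹) • 1 := by
      have hUv : q • ((⟨uz F q, uz_mem F q⟩ : Uvee F q) * ⟨ux F q, ux_mem F q⟩)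
          - q⁻¹ • ((⟨ux F q, ux_mem F q⟩ : Uvee F q) * ⟨uz F q, uz_mem F q⟩)
          = (q - q⁻¹) • (1 : Uvee F q) :=
        Subtype.ext rel_zx
      have h2 := congrArg ρ hUv
      rw [map_sub ρ] at h2
      simp only [map_smul, map_mul, map_one] at h2
      exact h2
    have hxy' : q • (AA * W) - q⁻¹ • (W * AA) = (q - q⁻¹) • 1 := by
      have h := congrArg (fun t => W * t * W) hA
      simpa only [mul_sub, sub_mul, mul_smul_comm, smul_mul_assoc, mul_one, one_mul,
        mul_assoc, hw1, hw2, hwl, hbl] using h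
    have hyz' : q • (W * CC) - q⁻¹ • (CC * W) = (q - q⁻¹) • 1 := by
      have h := congrArg (fun t => W * t * W) hB
      simpa only [mul_sub, sub_mul, mul_smul_comm, smul_mul_assoc, mul_one, one_mul,
        mul_assoc, hw1, hw2, hwl, hbl] using h
    -- build the extension
    set f : EqGen → Module.End F V := fun g => match g with
      | EqGen.x => AA | EqGen.y => W | EqGen.y' => BB | EqGen.z => CC with hf
    have hrel : ∀ ⦃p r : FreeAlgebra F EqGen⦄, EqRel F q p r →
        (FreeAlgebra.lift F f) p = (FreeAlgebra.lift F f) r := by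
      intro p r hpr
      induction hpr with
      | yy' =>
        simp only [map_mul, map_one, FreeAlgebra.lift_ι_apply, hf]
        exact hw1
      | y'y =>
        simp only [map_mul, map_one, FreeAlgebra.lift_ι_apply, hf]
        exact hw2
      | xy =>
        simp only [map_sub, map_smul, map_mul, map_one, FreeAlgebra.lift_ι_apply, hf]
        exact hxy'
      | yz =>
        simp only [map_sub, map_smul, map_mul, map_one, FreeAlgebra.lift_ι_apply, hf]
        exact hyz'
      | zx =>
        simp only [map_sub, map_smul, map_mul, map_one, FreeAlgebra.lift_ι_apply, hf]
        exact hC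
    refine ⟨RingQuot.liftAlgHom F ⟨FreeAlgebra.lift F f, hrel⟩, ?_⟩
    apply AlgHom.ext
    rintro ⟨v, hv⟩
    show RingQuot.liftAlgHom F ⟨FreeAlgebra.lift F f, hrel⟩ v = ρ ⟨v, hv⟩
    have hv' : v ∈ Algebra.adjoin F {ux F q, uy' F q, uz F q} := hv
    refine Algebra.adjoin_induction
      (p := fun w hw => RingQuot.liftAlgHom F ⟨FreeAlgebra.lift F f, hrel⟩ w = ρ ⟨w, hw⟩)
      ?_ ?_ ?_ ?_ hv'
    · intro w hw
      simp only [Set.mem_insert_iff, Set.mem_singleton_iff] at hw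
      rcases hw with rfl | rfl | rfl
      · unfold ux
        rw [RingQuot.liftAlgHom_mkAlgHom_apply, FreeAlgebra.lift_ι_apply]
        exact hAA
      · unfold uy'
        rw [RingQuot.liftAlgHom_mkAlgHom_apply, FreeAlgebra.lift_ι_apply]
        exact hBB
      · unfold uz
        rw [RingQuot.liftAlgHom_mkAlgHom_apply, FreeAlgebra.lift_ι_apply]
        exact hCC
    · intro r
      rw [AlgHom.commutes]
      exact (ρ.commutes r).symm
    · intro p s hp hs ihp ihs
      rw [map_add, ihp, ihs]
      exact (map_add ρ _ _).symm
    · intro p s hp hs ihp ihs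
      rw [map_mul, ihp, ihs]
      exact (map_mul ρ _ _).symm
  tfae_finish


end Paper
end
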